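/- arXiv:0711.2000 — 6 statements merged into one kernel-verified Lean document; each statement's English description precedes it below -/
import Mathlib

section
/- Let (g_n)_{n≥1} ⊂ L^∞(ℝ,X) with g_n → g in the norm of L^∞(ℝ,X), and let Λ be a closed subset of the unit circle Γ. If the circular spectrum satisfies σ(g_n) ⊂ Λ for all n ∈ ℕ, then σ(g) ⊂ Λ. -/
set_option linter.unusedSectionVars false
set_option linter.unusedVariables false


open MeasureTheory Complex Metric BoundedContinuousFunction

noncomputable section

/-- The space `L^∞(ℝ, X)` of (classes of) essentially bounded strongly measurable functions. -/
abbrev Linf (X : Type*) [NormedAddCommGroup X] : Type _ := Lp X ⊤ (volume : Measure ℝ)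

variable (X : Type*) [NormedAddCommGroup X] [NormedSpace ℂ X] [CompleteSpace X]

/-- The translation operator `S` on `L^∞(ℝ,X)`, `(S g)(t) = g (t + 1)`. -/
def transOp : Linf X →L[ℂ] Linf X :=
  (Lp.compMeasurePreservingₗᵢ ℂ (fun t : ℝ => t + 1)
    (measurePreserving_add_right volume 1)).toContinuousLinearMap

/-- The circular spectrum of `g ∈ L^∞(ℝ,X)`: the set of points `ξ₀` of the unit circle `Γ`
such that `λ ↦ R(λ,S) g` admits no analytic extension to any neighborhood of `ξ₀`. -/
def circSpec (g : Linf X) : Set ℂ :=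
  {ξ | ‖ξ‖ = 1 ∧ ¬∃ (U : Set ℂ) (F : ℂ → Linf X), IsOpen U ∧ ξ ∈ U ∧
    AnalyticOnNhd ℂ F U ∧ ∀ lam ∈ U, ‖lam‖ ≠ 1 → F lam = resolvent (transOp X) lam g}

/-- A bounded continuous function, viewed as an element of `L^∞(ℝ,X)`. -/
def bcToLinf (f : ℝ →ᵇ X) : Linf X :=
  (memLp_top_of_bound f.continuous.aestronglyMeasurable ‖f‖
    (Filter.Eventually.of_forall fun t => f.norm_coe_le_norm t)).toLp f

/-- Restriction of a continuous linear operator to an invariant submodule. -/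
def restrictCLM {E : Type*} [NormedAddCommGroup E] [NormedSpace ℂ E]
    (f : E →L[ℂ] E) (p : Submodule ℂ E) (h : ∀ x ∈ p, f x ∈ p) : p →L[ℂ] p where
  toFun x := ⟨f x, h x x.2⟩
  map_add' x y := by ext; simp
  map_smul' c x := by ext; simp
  cont := Continuous.subtype_mk (f.continuous.comp continuous_subtype_val) _

/-- The translation operator `S` on `BC(ℝ,X)`, `(S g)(t) = g (t + 1)`. -/
def transBC : (ℝ →ᵇ X) →L[ℂ] (ℝ →ᵇ X) :=
  LinearMap.mkContinuous
    { toFun := fun g => g.compContinuous ⟨fun t => t + 1, by continuity⟩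
      map_add' := fun g h => by ext t; simp
      map_smul' := fun c g => by ext t; simp }
    1 (fun g => by
      simpa using g.norm_compContinuous_le ⟨fun t => t + 1, by continuity⟩)

/-- The translation `S(τ)` on `BC(ℝ,X)`, `(S(τ) g)(t) = g (t + τ)`. -/
def translateBC (τ : ℝ) (g : ℝ →ᵇ X) : ℝ →ᵇ X :=
  g.compContinuous ⟨fun t => t + τ, by continuity⟩

/-- A 1-periodic strongly continuous evolutionary process on `X`. -/
structure EvolProcess (X : Type*) [NormedAddCommGroup X] [NormedSpace ℂ X] where
  U : ℝ → ℝ → X →L[ℂ] X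
  idem : ∀ t : ℝ, U t t = ContinuousLinearMap.id ℂ X
  comp : ∀ r s t : ℝ, r ≤ s → s ≤ t → (U t s).comp (U s r) = U t r
  strongCont : ∀ x : X, ContinuousOn (fun p : ℝ × ℝ => U p.1 p.2 x) {p : ℝ × ℝ | p.2 ≤ p.1}
  periodic : ∀ t s : ℝ, U (t + 1) (s + 1) = U t s
  bound : ∃ N ω : ℝ, 0 < N ∧ 0 < ω ∧ ∀ t s : ℝ, s ≤ t → ‖U t s‖ ≤ N * Real.exp (ω * (t - s))

/-! ### Auxiliary material for `stmt3` -/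

section AlgHelper
variable {A : Type*} [NormedRing A] [NormedAlgebra ℂ A] [CompleteSpace A]

/-- In a complex Banach algebra with `‖1‖ ≤ 1`, if `S` has a two-sided inverse and both have
norm at most `1`, then for `‖lam‖ ≠ 1` the element `lam•1 - S` is invertible, with explicit
bound on the inverse. -/
lemma isom_resolvent_bound {S Sinv : A} (hSS : S * Sinv = 1) (hSiS : Sinv * S = 1)
    (hSn : ‖S‖ ≤ 1) (hSin : ‖Sinv‖ ≤ 1) (h1 : ‖(1 : A)‖ ≤ 1)
    {lam : ℂ} (hlam : ‖lam‖ ≠ 1) :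
    ∃ u : Aˣ, (u : A) = algebraMap ℂ A lam - S ∧ ‖((u⁻¹ : Aˣ) : A)‖ ≤ |1 - ‖lam‖|⁻¹ := by
  rcases lt_or_gt_of_ne hlam with hlt | hgt
  · -- `‖lam‖ < 1` : `lam•1 - S = (-S) * (1 - lam • Sinv)`
    set x : A := lam • Sinv with hx
    have hxle : ‖x‖ ≤ ‖lam‖ := by
      calc ‖x‖ = ‖lam‖ * ‖Sinv‖ := by rw [hx, norm_smul]
        _ ≤ ‖lam‖ * 1 := by gcongr
        _ = ‖lam‖ := mul_one _
    have hxn : ‖x‖ < 1 := lt_of_le_of_lt hxle hlt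
    set y : A := ∑' n : ℕ, x ^ n with hy
    have hy1 : (1 - x) * y = 1 := mul_neg_geom_series x hxn
    have hy2 : y * (1 - x) = 1 := geom_series_mul_neg x hxn
    have key : algebraMap ℂ A lam - S = (-S) * (1 - x) := by
      rw [Algebra.algebraMap_eq_smul_one, hx, mul_sub, mul_one, mul_smul_comm,
        neg_mul, hSS]
      module
    refine ⟨⟨algebraMap ℂ A lam - S, -(y * Sinv), ?_, ?_⟩, rfl, ?_⟩
    · rw [key]
      calc (-S) * (1 - x) * -(y * Sinv) = S * ((1 - x) * y) * Sinv := by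
            simp [mul_assoc]
        _ = 1 := by rw [hy1, mul_one, hSS]
    · rw [key]
      calc -(y * Sinv) * ((-S) * (1 - x)) = y * (Sinv * S) * (1 - x) := by
            simp [mul_assoc]
        _ = 1 := by rw [hSiS, mul_one, hy2]
    · have hyn : ‖y‖ ≤ (1 - ‖x‖)⁻¹ := by
        have := tsum_geometric_le_of_norm_lt_one x hxn
        rw [← hy] at this
        linarith
      have h1x : (0:ℝ) < 1 - ‖x‖ := by linarith
      have h1l : (0:ℝ) < 1 - ‖lam‖ := by linarith
      have hmono : (1 - ‖x‖)⁻¹ ≤ (1 - ‖lam‖)⁻¹ := by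
        apply inv_anti₀ h1l
        linarith
      show ‖-(y * Sinv)‖ ≤ _
      rw [abs_of_pos h1l, norm_neg]
      calc ‖y * Sinv‖ ≤ ‖y‖ * ‖Sinv‖ := norm_mul_le _ _
        _ ≤ (1 - ‖x‖)⁻¹ * 1 := mul_le_mul hyn hSin (norm_nonneg _) (by positivity)
        _ = (1 - ‖x‖)⁻¹ := mul_one _
        _ ≤ (1 - ‖lam‖)⁻¹ := hmono
  · -- `‖lam‖ > 1`
    have hlam0 : lam ≠ 0 := by
      intro h; rw [h] at hgt; simp at hgt; linarith
    set x : A := lam⁻¹ • S with hx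
    have hxle : ‖x‖ ≤ ‖lam‖⁻¹ := by
      calc ‖x‖ = ‖lam⁻¹‖ * ‖S‖ := by rw [hx, norm_smul]
        _ ≤ ‖lam⁻¹‖ * 1 := by gcongr
        _ = ‖lam‖⁻¹ := by rw [mul_one, norm_inv]
    have hinv1 : ‖lam‖⁻¹ < 1 := by
      rw [inv_lt_one_iff₀]; right; exact hgt
    have hxn : ‖x‖ < 1 := lt_of_le_of_lt hxle hinv1
    set y : A := ∑' n : ℕ, x ^ n with hy
    have hy1 : (1 - x) * y = 1 := mul_neg_geom_series x hxn
    have hy2 : y * (1 - x) = 1 := geom_series_mul_neg x hxn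
    have key : algebraMap ℂ A lam - S = lam • (1 - x) := by
      rw [Algebra.algebraMap_eq_smul_one, hx, smul_sub, smul_smul,
        mul_inv_cancel₀ hlam0, one_smul]
    refine ⟨⟨algebraMap ℂ A lam - S, lam⁻¹ • y, ?_, ?_⟩, rfl, ?_⟩
    · rw [key, smul_mul_assoc, mul_smul_comm, smul_smul, mul_inv_cancel₀ hlam0,
        one_smul, hy1]
    · rw [key, smul_mul_assoc, mul_smul_comm, smul_smul, inv_mul_cancel₀ hlam0,
        one_smul, hy2]
    · have hyn : ‖y‖ ≤ (1 - ‖x‖)⁻¹ := by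
        have := tsum_geometric_le_of_norm_lt_one x hxn
        rw [← hy] at this
        linarith
      have h1x : (0:ℝ) < 1 - ‖lam‖⁻¹ := by linarith
      have hla : (0:ℝ) < ‖lam‖ := by linarith
      have hmono : (1 - ‖x‖)⁻¹ ≤ (1 - ‖lam‖⁻¹)⁻¹ := by
        apply inv_anti₀ h1x
        linarith
      show ‖lam⁻¹ • y‖ ≤ _
      calc ‖lam⁻¹ • y‖ = ‖lam‖⁻¹ * ‖y‖ := by rw [norm_smul, norm_inv]
        _ ≤ ‖lam‖⁻¹ * (1 - ‖lam‖⁻¹)⁻¹ := by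
            apply mul_le_mul_of_nonneg_left (hyn.trans hmono) (by positivity)
        _ = (‖lam‖ - 1)⁻¹ := by
            rw [← mul_inv, mul_sub, mul_one, mul_inv_cancel₀ hla.ne']
        _ = |1 - ‖lam‖|⁻¹ := by
            rw [abs_of_neg (by linarith : (1:ℝ) - ‖lam‖ < 0), neg_sub]

end AlgHelper

/-- The inverse translation operator. -/
def transOpInv : Linf X →L[ℂ] Linf X :=
  (Lp.compMeasurePreservingₗᵢ ℂ (fun t : ℝ => t + (-1))
    (measurePreserving_add_right volume (-1))).toContinuousLinearMap

lemma transOp_norm_map (v : Linf X) : ‖transOp X v‖ = ‖v‖ :=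
  Lp.norm_compMeasurePreserving v _

lemma transOpInv_norm_map (v : Linf X) : ‖transOpInv X v‖ = ‖v‖ :=
  Lp.norm_compMeasurePreserving v _

lemma transOp_norm_le : ‖transOp X‖ ≤ 1 :=
  ContinuousLinearMap.opNorm_le_bound _ zero_le_one
    (fun v => by rw [transOp_norm_map, one_mul])

lemma transOpInv_norm_le : ‖transOpInv X‖ ≤ 1 :=
  ContinuousLinearMap.opNorm_le_bound _ zero_le_one
    (fun v => by rw [transOpInv_norm_map, one_mul])

lemma transOp_mul_inv : transOp X * transOpInv X = 1 := by
  apply ContinuousLinearMap.ext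
  intro v
  show transOp X (transOpInv X v) = v
  apply Lp.ext
  have h1 : ⇑(transOpInv X v) =ᵐ[volume] ⇑v ∘ (fun t : ℝ => t + (-1)) :=
    Lp.coeFn_compMeasurePreserving v _
  have h2 : ⇑(transOp X (transOpInv X v)) =ᵐ[volume]
      ⇑(transOpInv X v) ∘ (fun t : ℝ => t + 1) :=
    Lp.coeFn_compMeasurePreserving _ _
  have h3 : (⇑(transOpInv X v)) ∘ (fun t : ℝ => t + 1) =ᵐ[volume]
      (⇑v ∘ (fun t : ℝ => t + (-1))) ∘ (fun t : ℝ => t + 1) :=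
    (measurePreserving_add_right volume 1).quasiMeasurePreserving.ae_eq_comp h1
  have h4 : (⇑v ∘ (fun t : ℝ => t + (-1))) ∘ (fun t : ℝ => t + 1) = ⇑v := by
    funext t; simp
  exact h2.trans (h4 ▸ h3)

lemma transOpInv_mul : transOpInv X * transOp X = 1 := by
  apply ContinuousLinearMap.ext
  intro v
  show transOpInv X (transOp X v) = v
  apply Lp.ext
  have h1 : ⇑(transOp X v) =ᵐ[volume] ⇑v ∘ (fun t : ℝ => t + 1) :=
    Lp.coeFn_compMeasurePreserving v _
  have h2 : ⇑(transOpInv X (transOp X v)) =ᵐ[volume]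
      ⇑(transOp X v) ∘ (fun t : ℝ => t + (-1)) :=
    Lp.coeFn_compMeasurePreserving _ _
  have h3 : (⇑(transOp X v)) ∘ (fun t : ℝ => t + (-1)) =ᵐ[volume]
      (⇑v ∘ (fun t : ℝ => t + 1)) ∘ (fun t : ℝ => t + (-1)) :=
    (measurePreserving_add_right volume (-1)).quasiMeasurePreserving.ae_eq_comp h1
  have h4 : (⇑v ∘ (fun t : ℝ => t + 1)) ∘ (fun t : ℝ => t + (-1)) = ⇑v := by
    funext t; simp
  exact h2.trans (h4 ▸ h3)

lemma transOp_resolvent_exists {lam : ℂ} (hlam : ‖lam‖ ≠ 1) :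
    IsUnit (algebraMap ℂ (Linf X →L[ℂ] Linf X) lam - transOp X) ∧
      ‖resolvent (transOp X) lam‖ ≤ |1 - ‖lam‖|⁻¹ := by
  obtain ⟨u, hu, hub⟩ := isom_resolvent_bound (transOp_mul_inv X) (transOpInv_mul X)
    (transOp_norm_le X) (transOpInv_norm_le X)
    (by rw [ContinuousLinearMap.one_def]; exact ContinuousLinearMap.norm_id_le) hlam
  refine ⟨⟨u, hu⟩, ?_⟩
  simp only [resolvent, ← hu, Ring.inverse_unit]
  exact hub

lemma resolvent_diffAt (v : Linf X) {lam : ℂ} (hlam : ‖lam‖ ≠ 1) :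
    DifferentiableAt ℂ (fun z => resolvent (transOp X) z v) lam := by
  have h1 : DifferentiableAt ℂ
      (fun z : ℂ => algebraMap ℂ (Linf X →L[ℂ] Linf X) z - transOp X) lam := by
    apply DifferentiableAt.sub_const
    have he : (fun z : ℂ => algebraMap ℂ (Linf X →L[ℂ] Linf X) z)
        = fun z : ℂ => z • (1 : Linf X →L[ℂ] Linf X) :=
      funext fun z => Algebra.algebraMap_eq_smul_one z
    show DifferentiableAt ℂ (fun z : ℂ => algebraMap ℂ (Linf X →L[ℂ] Linf X) z) lam
    rw [he]
    exact differentiableAt_id.smul_const 1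
  have h2 : DifferentiableAt ℂ
      (fun z : ℂ => Ring.inverse (algebraMap ℂ (Linf X →L[ℂ] Linf X) z - transOp X)) lam :=
    h1.inverse (transOp_resolvent_exists X hlam).1
  simpa only [resolvent] using h2.clm_apply (differentiableAt_const v)

lemma resolvent_apply_norm_le {lam : ℂ} (hlam : ‖lam‖ ≠ 1) (v : Linf X) :
    ‖resolvent (transOp X) lam v‖ ≤ |1 - ‖lam‖|⁻¹ * ‖v‖ :=
  le_trans ((resolvent (transOp X) lam).le_opNorm v)
    (mul_le_mul_of_nonneg_right (transOp_resolvent_exists X hlam).2 (norm_nonneg v))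

section MaxMod
variable {E : Type*} [NormedAddCommGroup E] [NormedSpace ℂ E]

/-- Two functions continuous on an open set that agree off the unit circle agree everywhere. -/
lemma eqOn_of_eq_off_circle {U : Set ℂ} (hU : IsOpen U) {F G : ℂ → E}
    (hF : ContinuousOn F U) (hG : ContinuousOn G U)
    (h : ∀ z ∈ U, ‖z‖ ≠ 1 → F z = G z) : ∀ z ∈ U, F z = G z := by
  intro z hz
  by_cases hz1 : ‖z‖ = 1
  · set w : ℕ → ℂ := fun k => (((1 + 1 / ((k : ℝ) + 1)) : ℝ) : ℂ) * z with hw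
    have h0 : Filter.Tendsto (fun k : ℕ => 1 + 1 / ((k : ℝ) + 1)) Filter.atTop (nhds 1) := by
      have : Filter.Tendsto (fun n : ℕ => 1 / ((n : ℝ) + 1)) Filter.atTop (nhds 0) :=
        tendsto_one_div_add_atTop_nhds_zero_nat
      simpa using this.const_add 1
    have hwt : Filter.Tendsto w Filter.atTop (nhds z) := by
      have h1 : Filter.Tendsto (fun k : ℕ => (((1 + 1 / ((k : ℝ) + 1)) : ℝ) : ℂ))
          Filter.atTop (nhds ((1:ℝ) : ℂ)) :=
        (Complex.continuous_ofReal.tendsto 1).comp h0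
      rw [hw]
      simpa using h1.mul_const z
    have hwn : ∀ k, ‖w k‖ ≠ 1 := by
      intro k
      have hpos : (0:ℝ) < 1 / ((k : ℝ) + 1) := by positivity
      rw [hw]
      simp only [norm_mul, Complex.norm_real, Real.norm_eq_abs, hz1, mul_one]
      rw [_root_.abs_of_pos (by linarith)]
      linarith
    have hmem : ∀ᶠ k in Filter.atTop, w k ∈ U := hwt.eventually (hU.eventually_mem hz)
    have hFt : Filter.Tendsto (F ∘ w) Filter.atTop (nhds (F z)) :=
      ((hF.continuousAt (hU.mem_nhds hz)).tendsto).comp hwt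
    have hGt : Filter.Tendsto (F ∘ w) Filter.atTop (nhds (G z)) := by
      refine Filter.Tendsto.congr' ?_ (((hG.continuousAt (hU.mem_nhds hz)).tendsto).comp hwt)
      filter_upwards [hmem] with k hk
      exact (h (w k) hk (hwn k)).symm
    exact tendsto_nhds_unique hFt hGt
  · exact h z hz hz1

/-- Maximum-principle bound: an analytic function on a disk dominated by `M / |1-‖z‖|`
off the unit circle on the boundary is bounded at the center. -/
lemma maxmod_bound [CompleteSpace E] {c : ℂ} (hc : c ≠ 0) {ρ : ℝ} (hρ : 0 < ρ) {G : ℂ → E}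
    (hG : DiffContOnCl ℂ G (ball c ρ)) {M : ℝ} (hM : 0 ≤ M)
    (hb : ∀ z : ℂ, ‖z - c‖ = ρ → ‖z‖ ≠ 1 → ‖G z‖ ≤ M / |1 - ‖z‖|) :
    ‖G c‖ ≤ (2 + ‖c‖ + ρ) * M / (ρ * ‖c‖) := by
  set q : ℂ := starRingEnd ℂ c with hq
  set ψ : ℂ → ℂ := fun z => q * z ^ 2 + ((ρ : ℂ) ^ 2 - 1 - q * c) * z + c with hψ
  have hψdiff : Differentiable ℂ ψ := by
    apply Differentiable.add
    apply Differentiable.add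
    · exact (differentiable_pow 2).const_mul q
    · exact differentiable_id.const_mul _
    · exact differentiable_const c
  have hf : DiffContOnCl ℂ (fun z => ψ z • G z) (ball c ρ) :=
    ⟨(hψdiff.differentiableOn).smul hG.differentiableOn,
      (hψdiff.continuous.continuousOn).smul hG.continuousOn⟩
  have hfront : ∀ z ∈ frontier (ball c ρ), ‖ψ z • G z‖ ≤ ρ * ((2 + ‖c‖ + ρ) * M) := by
    intro z hzf
    rw [frontier_ball c hρ.ne'] at hzf
    have hzs : ‖z - c‖ = ρ := by
      rw [mem_sphere_iff_norm] at hzf; exact hzf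
    have hψz : ψ z = (z - c) * (starRingEnd ℂ z * z - 1) := by
      have hzc : (z - c) * (starRingEnd ℂ z - starRingEnd ℂ c) = ((ρ : ℝ) : ℂ) ^ 2 := by
        rw [← map_sub, mul_conj', hzs]
      rw [hψ]
      push_cast
      linear_combination (-z) * hzc
    have hnz : ‖ψ z‖ = ρ * |‖z‖ ^ 2 - 1| := by
      rw [hψz, norm_mul, hzs]
      congr 1
      have h5 : starRingEnd ℂ z * z - 1 = (((‖z‖ : ℝ) ^ 2 - 1 : ℝ) : ℂ) := by
        rw [conj_mul']
        norm_cast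
      rw [h5, norm_real, Real.norm_eq_abs]
    by_cases hz1 : ‖z‖ = 1
    · rw [norm_smul, hnz, hz1]
      simp only [one_pow, sub_self, abs_zero, mul_zero, zero_mul]
      positivity
    · have hzb : ‖G z‖ ≤ M / |1 - ‖z‖| := hb z hzs hz1
      have habs : |‖z‖ ^ 2 - 1| = (‖z‖ + 1) * |1 - ‖z‖| := by
        have he : ‖z‖ ^ 2 - 1 = (‖z‖ + 1) * (‖z‖ - 1) := by ring
        rw [he, abs_mul, _root_.abs_of_nonneg (by positivity : (0:ℝ) ≤ ‖z‖ + 1), abs_sub_comm]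
      have hzle : ‖z‖ ≤ ‖c‖ + ρ := by
        calc ‖z‖ = ‖c + (z - c)‖ := by ring_nf
          _ ≤ ‖c‖ + ‖z - c‖ := norm_add_le _ _
          _ = ‖c‖ + ρ := by rw [hzs]
      have h1z : (0:ℝ) < |1 - ‖z‖| := by
        rw [abs_pos]
        intro hcon
        apply hz1
        linarith
      calc ‖ψ z • G z‖ = ρ * ((‖z‖ + 1) * |1 - ‖z‖|) * ‖G z‖ := by
            rw [norm_smul, hnz, habs]
        _ ≤ ρ * ((‖z‖ + 1) * |1 - ‖z‖|) * (M / |1 - ‖z‖|) := by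
            apply mul_le_mul_of_nonneg_left hzb
            positivity
        _ = ρ * ((‖z‖ + 1) * M) := by
            have hcan : M / |1 - ‖z‖| * |1 - ‖z‖| = M := div_mul_cancel₀ M h1z.ne'
            calc ρ * ((‖z‖ + 1) * |1 - ‖z‖|) * (M / |1 - ‖z‖|)
                = (M / |1 - ‖z‖| * |1 - ‖z‖|) * (ρ * (‖z‖ + 1)) := by ring
              _ = M * (ρ * (‖z‖ + 1)) := by rw [hcan]
              _ = ρ * ((‖z‖ + 1) * M) := by ring
        _ ≤ ρ * ((2 + ‖c‖ + ρ) * M) := by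
            apply mul_le_mul_of_nonneg_left _ hρ.le
            apply mul_le_mul_of_nonneg_right _ hM
            linarith
  have hmax : ‖ψ c • G c‖ ≤ ρ * ((2 + ‖c‖ + ρ) * M) :=
    Complex.norm_le_of_forall_mem_frontier_norm_le isBounded_ball hf hfront
      (subset_closure (mem_ball_self hρ))
  have hψc : ψ c = (ρ : ℂ) ^ 2 * c := by rw [hψ]; ring
  rw [hψc, norm_smul, norm_mul, norm_pow, norm_real, Real.norm_eq_abs,
    abs_of_pos hρ] at hmax
  have hcpos : (0:ℝ) < ‖c‖ := norm_pos_iff.mpr hc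
  rw [le_div_iff₀ (mul_pos hρ hcpos)]
  nlinarith [hmax, norm_nonneg (G c)]

end MaxMod

/-- if `g_n → g` in `L^∞(ℝ,X)`, `Λ ⊆ Γ` is closed and `σ(g_n) ⊆ Λ` for each `n`,
then `σ(g) ⊆ Λ`. -/
theorem stmt3 (g : ℕ → Linf X) (glim : Linf X)
    (hconv : Filter.Tendsto g Filter.atTop (nhds glim))
    (Λ : Set ℂ) (hΛclosed : IsClosed Λ) (hΛ : Λ ⊆ Metric.sphere (0 : ℂ) 1)
    (hspec : ∀ n : ℕ, circSpec X (g n) ⊆ Λ) :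
    circSpec X glim ⊆ Λ := by
  intro ξ hξ
  obtain ⟨hξ1, hξ2⟩ := hξ
  by_contra hξΛ
  apply hξ2
  -- choose a small radius
  obtain ⟨δ, hδpos, hδsub⟩ := Metric.mem_nhds_iff.mp (hΛclosed.isOpen_compl.mem_nhds hξΛ)
  set ε : ℝ := min (δ / 8) (1 / 8) with hε
  have hεpos : 0 < ε := lt_min (by linarith) (by norm_num)
  have hε8 : ε ≤ 1 / 8 := min_le_right _ _
  have hεδ : 4 * ε < δ := by
    have : ε ≤ δ / 8 := min_le_left _ _
    linarith
  set B : Set ℂ := ball ξ (4 * ε) with hB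
  set s : Set ℂ := ball ξ (2 * ε) with hs
  have hsB : s ⊆ B := ball_subset_ball (by linarith)
  have hBΛ : ∀ z ∈ B, z ∉ Λ := by
    intro z hz hzΛ
    have : z ∈ Λᶜ := hδsub (mem_ball.mpr (lt_of_lt_of_le (mem_ball.mp hz) (by linarith)))
    exact this hzΛ
  -- norm bounds on s and its ε-neighbourhood
  have hnorm_lb : ∀ z ∈ s, 3/4 ≤ ‖z‖ ∧ ‖z‖ ≤ 5/4 := by
    intro z hz
    have hd : ‖z - ξ‖ < 2 * ε := by
      rw [← dist_eq_norm]; exact mem_ball.mp hz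
    have h1 : ‖ξ‖ - ‖z‖ ≤ ‖z - ξ‖ := by
      have := norm_sub_norm_le ξ z
      rwa [norm_sub_rev] at this
    have h2 : ‖z‖ - ‖ξ‖ ≤ ‖z - ξ‖ := norm_sub_norm_le z ξ
    constructor <;> [skip; skip] <;> rw [hξ1] at h1 h2 <;> linarith [hε8]
  -- local extensions
  have hloc : ∀ (n : ℕ), ∀ μ ∈ B, ∃ (U : Set ℂ) (F : ℂ → Linf X), IsOpen U ∧ μ ∈ U ∧
      AnalyticOnNhd ℂ F U ∧ ∀ z ∈ U, ‖z‖ ≠ 1 → F z = resolvent (transOp X) z (g n) := by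
    intro n μ hμ
    by_cases hμ1 : ‖μ‖ = 1
    · have hnotin : μ ∉ circSpec X (g n) := fun hmem => hBΛ μ hμ (hspec n hmem)
      have hE : ∃ (U : Set ℂ) (F : ℂ → Linf X), IsOpen U ∧ μ ∈ U ∧
          AnalyticOnNhd ℂ F U ∧ ∀ z ∈ U, ‖z‖ ≠ 1 → F z = resolvent (transOp X) z (g n) := by
        by_contra hE
        exact hnotin ⟨hμ1, hE⟩
      exact hE
    · refine ⟨{w : ℂ | ‖w‖ ≠ 1}, fun z => resolvent (transOp X) z (g n),
        ?_, hμ1, ?_, fun z _ _ => rfl⟩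
      · exact IsOpen.preimage continuous_norm isOpen_ne
      · apply DifferentiableOn.analyticOnNhd _ (IsOpen.preimage continuous_norm isOpen_ne)
        exact fun z hz => (resolvent_diffAt X (g n) hz).differentiableWithinAt
  -- glue local extensions over B
  have hglue : ∀ n : ℕ, ∃ Fn : ℂ → Linf X, AnalyticOnNhd ℂ Fn B ∧
      ∀ z ∈ B, ‖z‖ ≠ 1 → Fn z = resolvent (transOp X) z (g n) := by
    intro n
    classical
    choose U F hUo hUm hFa hFr using hloc n
    have hagree : ∀ (μ₁ : ℂ) (h₁ : μ₁ ∈ B) (μ₂ : ℂ) (h₂ : μ₂ ∈ B) (z : ℂ),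
        z ∈ U μ₁ h₁ → z ∈ U μ₂ h₂ → F μ₁ h₁ z = F μ₂ h₂ z := by
      intro μ₁ h₁ μ₂ h₂ z hz1 hz2
      refine eqOn_of_eq_off_circle ((hUo μ₁ h₁).inter (hUo μ₂ h₂))
        (((hFa μ₁ h₁).mono Set.inter_subset_left).continuousOn)
        (((hFa μ₂ h₂).mono Set.inter_subset_right).continuousOn)
        (fun w hw hw1 => ?_) z ⟨hz1, hz2⟩
      rw [hFr μ₁ h₁ w hw.1 hw1, hFr μ₂ h₂ w hw.2 hw1]
    refine ⟨fun z => if hz : z ∈ B then F z hz z else 0, ?_, ?_⟩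
    · intro z₀ hz₀
      apply AnalyticAt.congr (hFa z₀ hz₀ z₀ (hUm z₀ hz₀))
      have hVmem : (U z₀ hz₀ ∩ B) ∈ nhds z₀ :=
        ((hUo z₀ hz₀).inter isOpen_ball).mem_nhds ⟨hUm z₀ hz₀, hz₀⟩
      filter_upwards [hVmem] with z hz
      rw [dif_pos hz.2]
      exact hagree z₀ hz₀ z hz.2 z hz.1 (hUm z hz.2)
    · intro z hz hz1
      simp only [dif_pos hz]
      exact hFr z hz z (hUm z hz) hz1
  choose FF hFa' hFr' using hglue
  -- uniform bound on differences via the maximum principle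
  have hC : ∀ n m : ℕ, ∀ z ∈ s, ‖FF n z - FF m z‖ ≤ 5 / ε * ‖g n - g m‖ := by
    intro n m z hz
    obtain ⟨hz34, hz54⟩ := hnorm_lb z hz
    have hz0 : z ≠ 0 := by
      intro h; rw [h] at hz34; simp at hz34; linarith
    have hzd : dist z ξ < 2 * ε := mem_ball.mp hz
    have hsub : closedBall z ε ⊆ B := by
      intro w hw
      rw [mem_ball]
      calc dist w ξ ≤ dist w z + dist z ξ := dist_triangle _ _ _
        _ < ε + 2 * ε := add_lt_add_of_le_of_lt (mem_closedBall.mp hw) hzd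
        _ ≤ 4 * ε := by linarith
    have hGd : DiffContOnCl ℂ (fun w => FF n w - FF m w) (ball z ε) := by
      constructor
      · exact (((hFa' n).sub (hFa' m)).differentiableOn).mono
          ((ball_subset_closedBall).trans hsub)
      · exact (((hFa' n).sub (hFa' m)).continuousOn).mono
          ((closure_ball_subset_closedBall).trans hsub)
    have hbd : ∀ w : ℂ, ‖w - z‖ = ε → ‖w‖ ≠ 1 →
        ‖FF n w - FF m w‖ ≤ ‖g n - g m‖ / |1 - ‖w‖| := by
      intro w hw hw1
      have hwB : w ∈ B := hsub (by rw [mem_closedBall, dist_eq_norm, hw])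
      rw [hFr' n w hwB hw1, hFr' m w hwB hw1, ← map_sub]
      rw [div_eq_inv_mul]
      exact resolvent_apply_norm_le X hw1 (g n - g m)
    have hmain := maxmod_bound hz0 hεpos hGd (norm_nonneg (g n - g m)) hbd
    refine hmain.trans ?_
    set M : ℝ := ‖g n - g m‖ with hM
    have hMnn : 0 ≤ M := norm_nonneg _
    rw [div_le_iff₀ (mul_pos hεpos (by linarith : (0:ℝ) < ‖z‖))]
    have hrw : 5 / ε * M * (ε * ‖z‖) = 5 * M * ‖z‖ := by
      field_simp
    rw [hrw]
    nlinarith [mul_le_mul_of_nonneg_right hz34 hMnn, hε8, hεpos]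
  -- uniform Cauchy sequence
  have hcs : CauchySeq g := hconv.cauchySeq
  have hCpos : 0 < 5 / ε := by positivity
  have hucs : UniformCauchySeqOn FF Filter.atTop s := by
    rw [Metric.uniformCauchySeqOn_iff]
    intro θ hθ
    obtain ⟨N, hN⟩ := Metric.cauchySeq_iff.mp hcs (θ / (5 / ε + 1))
      (by positivity)
    refine ⟨N, fun m hm k hk z hz => ?_⟩
    have h1 : dist (FF m z) (FF k z) ≤ 5 / ε * dist (g m) (g k) := by
      rw [dist_eq_norm, dist_eq_norm]
      exact hC m k z hz
    have h2 : dist (g m) (g k) < θ / (5 / ε + 1) := hN m hm k hk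
    calc dist (FF m z) (FF k z) ≤ 5 / ε * dist (g m) (g k) := h1
      _ < 5 / ε * (θ / (5 / ε + 1)) := by
          apply mul_lt_mul_of_pos_left h2 hCpos
      _ = θ * ((5 / ε) / (5 / ε + 1)) := by ring
      _ ≤ θ * 1 := by
          apply mul_le_mul_of_nonneg_left _ hθ.le
          rw [div_le_one (by positivity : (0:ℝ) < 5 / ε + 1)]
          linarith
      _ = θ := mul_one θ
  -- pointwise limits
  have hptl : ∀ z : ℂ, ∃ L : Linf X, z ∈ s → Filter.Tendsto (fun n => FF n z)
      Filter.atTop (nhds L) := by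
    intro z
    by_cases hz : z ∈ s
    · have hcz : CauchySeq (fun n => FF n z) := by
        rw [Metric.cauchySeq_iff]
        intro θ hθ
        obtain ⟨N, hN⟩ := Metric.uniformCauchySeqOn_iff.mp hucs θ hθ
        exact ⟨N, fun m hm k hk => hN m hm k hk z hz⟩
      obtain ⟨L, hL⟩ := cauchySeq_tendsto_of_complete hcz
      exact ⟨L, fun _ => hL⟩
    · exact ⟨0, fun h => absurd h hz⟩
  choose FL hFL using hptl
  have htuo : TendstoUniformlyOn FF FL Filter.atTop s :=
    hucs.tendstoUniformlyOn_of_tendsto (fun z hz => hFL z hz)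
  -- the limit is analytic
  have hFLd : DifferentiableOn ℂ FL s := by
    apply (htuo.tendstoLocallyUniformlyOn).differentiableOn _ isOpen_ball
    exact Filter.Eventually.of_forall (fun n => ((hFa' n).mono hsB).differentiableOn)
  have hFLa : AnalyticOnNhd ℂ FL s := hFLd.analyticOnNhd isOpen_ball
  -- the limit extends the resolvent of the limit function
  have hres : ∀ z ∈ s, ‖z‖ ≠ 1 → FL z = resolvent (transOp X) z glim := by
    intro z hz hz1
    have ht1 : Filter.Tendsto (fun n => FF n z) Filter.atTop
        (nhds (resolvent (transOp X) z glim)) := by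
      have hcont : Filter.Tendsto (fun n => resolvent (transOp X) z (g n)) Filter.atTop
          (nhds (resolvent (transOp X) z glim)) :=
        (((resolvent (transOp X) z).continuous.tendsto glim).comp hconv)
      refine hcont.congr (fun n => ?_)
      exact (hFr' n z (hsB hz) hz1).symm
    exact tendsto_nhds_unique (hFL z hz) ht1
  exact ⟨s, FL, isOpen_ball, mem_ball_self (by positivity), hFLa, hres⟩

end
end

section
/- Let A be a bounded linear operator on X and let 𝒜 denote the operator of multiplication by A on L^∞(ℝ,X), i.e. (𝒜g)(t) := A(g(t)). Then for every g ∈ L^∞(ℝ,X) the circular spectrum satisfies σ(𝒜g) ⊂ σ(g). -/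
open MeasureTheory Complex Metric BoundedContinuousFunction

noncomputable section

variable (X : Type*) [NormedAddCommGroup X] [NormedSpace ℂ X] [CompleteSpace X]

/-- for a bounded operator `A` on `X` and the multiplication operator
`(𝒜 g)(t) = A (g t)` on `L^∞(ℝ,X)`, one has `σ(𝒜 g) ⊆ σ(g)`. -/
theorem stmt4 (A : X →L[ℂ] X) (g : Linf X) :
    circSpec X (A.compLp g : Linf X) ⊆ circSpec X g := by
  haveI : Fact ((1 : ENNReal) ≤ ⊤) := ⟨le_top⟩
  set T : Linf X →L[ℂ] Linf X := A.compLpL ⊤ volume with hT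
  -- `T` commutes with the translation operator
  have hTS : Commute T (transOp X) := by
    ext1 f
    apply MeasureTheory.Lp.ext
    have h1 := MeasureTheory.Lp.coeFn_compMeasurePreserving (μb := (volume : Measure ℝ)) f
      (measurePreserving_add_right volume 1)
    have h2 := A.coeFn_compLpL (μ := (volume : Measure ℝ)) (p := ⊤)
      (MeasureTheory.Lp.compMeasurePreserving (fun t : ℝ => t + 1)
        (measurePreserving_add_right volume 1) f)
    have h3 := A.coeFn_compLpL (μ := (volume : Measure ℝ)) (p := ⊤) f
    have h4 := MeasureTheory.Lp.coeFn_compMeasurePreserving (μb := (volume : Measure ℝ))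
      (A.compLpL ⊤ volume f) (measurePreserving_add_right volume 1)
    have h5 : ((A.compLpL ⊤ volume f : ℝ → X) ∘ (fun t : ℝ => t + 1))
        =ᵐ[volume] (fun a : ℝ => A (f a)) ∘ (fun t : ℝ => t + 1) :=
      (measurePreserving_add_right volume 1).quasiMeasurePreserving.ae_eq_comp h3
    have h1' : ((fun a : ℝ => A _) : ℝ → X) =ᵐ[volume] _ := h1.fun_comp A
    calc (T * transOp X) f =ᵐ[volume]
        fun a : ℝ => A ((MeasureTheory.Lp.compMeasurePreserving (fun t : ℝ => t + 1)
          (measurePreserving_add_right volume 1) f : ℝ → X) a) := h2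
      _ =ᵐ[volume] fun a : ℝ => A (f (a + 1)) := h1.fun_comp A
      _ =ᵐ[volume] (A.compLpL ⊤ volume f : ℝ → X) ∘ (fun t : ℝ => t + 1) := h5.symm
      _ =ᵐ[volume] (transOp X * T) f := h4.symm
  -- hence `T` commutes with every resolvent of the translation operator
  have hcomm : ∀ lam : ℂ, Commute T (resolvent (transOp X) lam) := by
    intro lam
    have h1 : Commute T (algebraMap ℂ (Linf X →L[ℂ] Linf X) lam - transOp X) :=
      (Algebra.commute_algebraMap_right lam T).sub_right hTS
    have hre : resolvent (transOp X) lam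
        = Ring.inverse (algebraMap ℂ (Linf X →L[ℂ] Linf X) lam - transOp X) := rfl
    rw [hre]
    by_cases hu : IsUnit (algebraMap ℂ (Linf X →L[ℂ] Linf X) lam - transOp X)
    · rw [← hu.unit_spec] at h1 ⊢
      rw [Ring.inverse_unit]
      exact h1.units_inv_right
    · rw [Ring.inverse_non_unit _ hu]
      exact Commute.zero_right T
  intro ξ hξ
  refine ⟨hξ.1, fun h => hξ.2 ?_⟩
  obtain ⟨U, F, hU, hξU, hF, hres⟩ := h
  refine ⟨U, fun lam => T (F lam), hU, hξU,
    fun z hz => ((T.analyticAt (F z)).comp (hF z hz) : ), ?_⟩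
  intro lam hlam hnorm
  have hA : (A.compLp g : Linf X) = T g := rfl
  show T (F lam) = resolvent (transOp X) lam (A.compLp g)
  rw [hres lam hlam hnorm, hA]
  calc T (resolvent (transOp X) lam g)
      = (T * resolvent (transOp X) lam) g := rfl
    _ = (resolvent (transOp X) lam * T) g := by rw [(hcomm lam).eq]
    _ = resolvent (transOp X) lam (T g) := rfl

end
end

section
/- If g ∈ L^∞(ℝ,X) has empty circular spectrum, σ(g) = ∅, then g = 0. -/
open MeasureTheory Complex Metric BoundedContinuousFunction

noncomputable section

variable (X : Type*) [NormedAddCommGroup X] [NormedSpace ℂ X] [CompleteSpace X]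

namespace Stmt5Aux

variable {X}

theorem cancel' (a b : ℝ) (hab : a + b = 0) (u : Linf X) :
    Lp.compMeasurePreserving (fun t : ℝ => t + a) (measurePreserving_add_right volume a)
      (Lp.compMeasurePreserving (fun t : ℝ => t + b)
        (measurePreserving_add_right volume b) u) = u := by
  apply Lp.ext
  have h1 := Lp.coeFn_compMeasurePreserving (μ := (volume : Measure ℝ))
    (Lp.compMeasurePreserving (fun t : ℝ => t + b)
      (measurePreserving_add_right volume b) u) (measurePreserving_add_right volume a)
  have h2 := Lp.coeFn_compMeasurePreserving (μ := (volume : Measure ℝ)) u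
    (measurePreserving_add_right volume b)
  have h3 := (measurePreserving_add_right (volume : Measure ℝ)
    a).quasiMeasurePreserving.ae_eq_comp h2
  refine h1.trans (h3.trans ?_)
  filter_upwards with t
  show u ((t + a) + b) = u t
  congr 1
  linarith

def transOpInv : Linf X →L[ℂ] Linf X :=
  (Lp.compMeasurePreservingₗᵢ ℂ (fun t : ℝ => t + (-1))
    (measurePreserving_add_right volume (-1))).toContinuousLinearMap

set_option linter.unusedSectionVars false

theorem transOp_mul_inv : transOp X * transOpInv = 1 :=
  ContinuousLinearMap.ext fun u => cancel' 1 (-1) (by norm_num) u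

theorem inv_mul_transOp : transOpInv * transOp X = 1 :=
  ContinuousLinearMap.ext fun u => cancel' (-1) 1 (by norm_num) u

theorem isUnit_transOp : IsUnit (transOp X) :=
  ⟨⟨transOp X, transOpInv, transOp_mul_inv, inv_mul_transOp⟩, rfl⟩

theorem norm_transOp_apply (u : Linf X) : ‖transOp X u‖ = ‖u‖ :=
  (Lp.compMeasurePreservingₗᵢ ℂ (fun t : ℝ => t + 1)
    (measurePreserving_add_right volume 1)).norm_map u

theorem norm_transOp_le : ‖transOp X‖ ≤ 1 :=
  ContinuousLinearMap.opNorm_le_bound _ zero_le_one fun u => by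
    rw [norm_transOp_apply, one_mul]

theorem norm_transOpInv_le : ‖(transOpInv : Linf X →L[ℂ] Linf X)‖ ≤ 1 :=
  ContinuousLinearMap.opNorm_le_bound _ zero_le_one fun u => by
    rw [one_mul]
    exact le_of_eq <| (Lp.compMeasurePreservingₗᵢ ℂ (fun t : ℝ => t + (-1))
      (measurePreserving_add_right volume (-1))).norm_map u


theorem isUnit_sub (lam : ℂ) (hlam : ‖lam‖ ≠ 1) :
    IsUnit (algebraMap ℂ (Linf X →L[ℂ] Linf X) lam - transOp X) := by
  rcases lt_or_gt_of_ne hlam with hl | hl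
  · have hns : ‖lam • (transOpInv : Linf X →L[ℂ] Linf X)‖ < 1 := by
      calc ‖lam • (transOpInv : Linf X →L[ℂ] Linf X)‖
          ≤ ‖lam‖ * ‖(transOpInv : Linf X →L[ℂ] Linf X)‖ :=
            ContinuousLinearMap.opNorm_smul_le _ _
        _ ≤ ‖lam‖ * 1 := mul_le_mul_of_nonneg_left norm_transOpInv_le (norm_nonneg _)
        _ < 1 := by rw [mul_one]; exact hl
    have hu1 : IsUnit (1 - lam • (transOpInv : Linf X →L[ℂ] Linf X)) :=
      (Units.oneSub _ hns).isUnit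
    have key : algebraMap ℂ (Linf X →L[ℂ] Linf X) lam - transOp X
        = -(transOp X * (1 - lam • transOpInv)) := by
      rw [mul_sub, mul_one, Algebra.algebraMap_eq_smul_one, mul_smul_comm, transOp_mul_inv]
      exact (neg_sub _ _).symm
    rw [key]
    exact (isUnit_transOp.mul hu1).neg
  · have hlam0 : lam ≠ 0 := by
      intro h0; rw [h0, norm_zero] at hl; linarith
    have hns : ‖lam⁻¹ • transOp X‖ < 1 := by
      calc ‖lam⁻¹ • transOp X‖ ≤ ‖lam⁻¹‖ * ‖transOp X‖ :=
            ContinuousLinearMap.opNorm_smul_le _ _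
        _ ≤ ‖lam⁻¹‖ * 1 := mul_le_mul_of_nonneg_left norm_transOp_le (norm_nonneg _)
        _ < 1 := by
            rw [mul_one, norm_inv, inv_lt_one_iff₀]
            right; exact hl
    have hu1 : IsUnit (1 - lam⁻¹ • transOp X) := (Units.oneSub _ hns).isUnit
    have hu2 : IsUnit (algebraMap ℂ (Linf X →L[ℂ] Linf X) lam) :=
      (IsUnit.mk0 lam hlam0).map (algebraMap ℂ (Linf X →L[ℂ] Linf X))
    have key : algebraMap ℂ (Linf X →L[ℂ] Linf X) lam - transOp X
        = algebraMap ℂ (Linf X →L[ℂ] Linf X) lam * (1 - lam⁻¹ • transOp X) := by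
      rw [mul_sub, mul_one, Algebra.algebraMap_eq_smul_one, smul_mul_assoc, one_mul,
        smul_smul, mul_inv_cancel₀ hlam0, one_smul]
    rw [key]
    exact hu2.mul hu1

theorem sub_apply_resolvent (g : Linf X) (lam : ℂ) (hlam : ‖lam‖ ≠ 1) :
    (algebraMap ℂ (Linf X →L[ℂ] Linf X) lam - transOp X) (resolvent (transOp X) lam g) = g := by
  have h : ((algebraMap ℂ (Linf X →L[ℂ] Linf X) lam - transOp X) *
      resolvent (transOp X) lam) g = g := by
    rw [resolvent, Ring.mul_inverse_cancel _ (isUnit_sub lam hlam), ContinuousLinearMap.one_apply]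
  simpa [ContinuousLinearMap.mul_apply] using h

theorem resolvent_bound (g : Linf X) (lam : ℂ) (h1 : 1 < ‖lam‖) :
    ‖resolvent (transOp X) lam g‖ ≤ ‖g‖ / (‖lam‖ - 1) := by
  set y := resolvent (transOp X) lam g with hy
  have hay : lam • y - transOp X y = g := by
    have := sub_apply_resolvent g lam (ne_of_gt h1)
    simpa [Algebra.algebraMap_eq_smul_one, ContinuousLinearMap.sub_apply,
      ContinuousLinearMap.smul_apply, ContinuousLinearMap.one_apply] using this
  have hge : (‖lam‖ - 1) * ‖y‖ ≤ ‖g‖ := by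
    have h2 : ‖lam • y‖ - ‖transOp X y‖ ≤ ‖lam • y - transOp X y‖ :=
      norm_sub_norm_le _ _
    rw [hay, norm_smul, norm_transOp_apply] at h2
    nlinarith [norm_nonneg y]
  rw [le_div_iff₀ (by linarith)]
  linarith [hge]

theorem diff_resolvent (g : Linf X) {lam : ℂ} (hlam : ‖lam‖ ≠ 1) :
    DifferentiableAt ℂ (fun z => resolvent (transOp X) z g) lam := by
  have h0 : DifferentiableAt ℂ
      (fun z : ℂ => algebraMap ℂ (Linf X →L[ℂ] Linf X) z - transOp X) lam := by
    simp only [Algebra.algebraMap_eq_smul_one]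
    exact (differentiableAt_id.smul_const _).sub_const _
  have h1 : DifferentiableAt ℂ
      (fun z : ℂ => resolvent (transOp X) z g) lam :=
    ((ContinuousLinearMap.apply ℂ (Linf X) g).differentiableAt).comp lam
      (h0.inverse (isUnit_sub lam hlam))
  exact h1

end Stmt5Aux

open Stmt5Aux in
/-- if `g ∈ L^∞(ℝ,X)` has empty circular spectrum then `g = 0`. -/
theorem stmt5 (g : Linf X) (h : circSpec X g = ∅) : g = 0 := by
  classical
  have hQ : ∀ ξ : ℂ, ∃ (U : Set ℂ) (F : ℂ → Linf X), IsOpen U ∧ ξ ∈ U ∧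
      (∀ x ∈ U, DifferentiableAt ℂ F x) ∧
      ∀ lam ∈ U, ‖lam‖ ≠ 1 → F lam = resolvent (transOp X) lam g := by
    intro ξ
    by_cases hξ : ‖ξ‖ = 1
    · have hmem : ξ ∉ circSpec X g := by rw [h]; exact Set.notMem_empty ξ
      rw [circSpec, Set.mem_setOf_eq] at hmem
      push_neg at hmem
      obtain ⟨U, F, hU, hξU, hF, hres⟩ := hmem hξ
      exact ⟨U, F, hU, hξU, fun x hx => (hF x hx).differentiableAt, hres⟩
    · refine ⟨{z : ℂ | ‖z‖ ≠ 1}, fun z => resolvent (transOp X) z g, ?_, hξ,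
        fun x hx => diff_resolvent g hx, fun lam _ _ => rfl⟩
      exact isOpen_compl_singleton.preimage continuous_norm
  choose U F hUopen hUmem hFdiff hFres using hQ
  set G : ℂ → Linf X := fun z => F z z with hG
  -- the local extensions agree with G on their domains
  have key : ∀ ξ : ℂ, ∀ μ ∈ U ξ, F ξ μ = G μ := by
    intro ξ μ hμ
    by_cases hμ1 : ‖μ‖ = 1
    · -- approximate μ by off-circle points
      set s : ℕ → ℂ := fun n => ((1 + ((n : ℝ) + 1)⁻¹ : ℝ) : ℂ) * μ with hs
      have hpos : ∀ n : ℕ, (0 : ℝ) < ((n : ℝ) + 1)⁻¹ := fun n => by positivity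
      have hsnorm : ∀ n : ℕ, ‖s n‖ ≠ 1 := by
        intro n
        have : ‖s n‖ = (1 + ((n : ℝ) + 1)⁻¹) := by
          rw [hs]
          simp only [norm_mul, hμ1, mul_one, Complex.norm_real]
          rw [Real.norm_eq_abs, abs_of_pos (by linarith [hpos n])]
        rw [this]
        linarith [hpos n]
      have hts : Filter.Tendsto s Filter.atTop (nhds μ) := by
        have h1 : Filter.Tendsto (fun n : ℕ => ((n : ℝ) + 1)⁻¹) Filter.atTop (nhds 0) := by
          apply Filter.Tendsto.comp tendsto_inv_atTop_zero
          exact Filter.tendsto_atTop_add_const_right _ 1 tendsto_natCast_atTop_atTop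
        have h2 : Filter.Tendsto (fun n : ℕ => (1 + ((n : ℝ) + 1)⁻¹ : ℝ)) Filter.atTop (nhds 1) := by
          simpa using tendsto_const_nhds.add h1
        have h3 : Filter.Tendsto (fun n : ℕ => (((1 + ((n : ℝ) + 1)⁻¹ : ℝ)) : ℂ)) Filter.atTop
            (nhds ((1 : ℝ) : ℂ)) := (Complex.continuous_ofReal.tendsto _).comp h2
        have h4 := h3.mul_const μ
        rw [hs]
        simpa only [Complex.ofReal_one, one_mul] using h4
      have hev : ∀ᶠ n in Filter.atTop, s n ∈ U ξ ∩ U μ :=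
        hts (Filter.mem_map.mp (((hUopen ξ).inter (hUopen μ)).mem_nhds ⟨hμ, hUmem μ⟩))
      have h1 : Filter.Tendsto (fun n => F ξ (s n)) Filter.atTop (nhds (F ξ μ)) :=
        ((hFdiff ξ μ hμ).continuousAt.tendsto).comp hts
      have h2 : Filter.Tendsto (fun n => F μ (s n)) Filter.atTop (nhds (F μ μ)) :=
        ((hFdiff μ μ (hUmem μ)).continuousAt.tendsto).comp hts
      have heq : (fun n => F ξ (s n)) =ᶠ[Filter.atTop] fun n => F μ (s n) := by
        filter_upwards [hev] with n hn
        rw [hFres ξ _ hn.1 (hsnorm n), hFres μ _ hn.2 (hsnorm n)]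
      exact tendsto_nhds_unique (h1.congr' heq) h2
    · rw [hFres ξ μ hμ hμ1]
      exact (hFres μ μ (hUmem μ) hμ1).symm
  have hdiffG : Differentiable ℂ G := by
    intro z
    have hEq : G =ᶠ[nhds z] F z :=
      Filter.eventuallyEq_of_mem ((hUopen z).mem_nhds (hUmem z))
        (fun μ hμ => (key z μ hμ).symm)
    exact (hEq.differentiableAt_iff).mpr (hFdiff z z (hUmem z))
  have hGval : ∀ z : ℂ, ‖z‖ ≠ 1 → G z = resolvent (transOp X) z g :=
    fun z hz => hFres z z (hUmem z) hz
  have hGb : ∀ z : ℂ, 1 < ‖z‖ → ‖G z‖ ≤ ‖g‖ / (‖z‖ - 1) := by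
    intro z hz
    rw [hGval z (ne_of_gt hz)]
    exact resolvent_bound g z hz
  obtain ⟨C, hC⟩ : ∃ C, ∀ z ∈ Metric.closedBall (0 : ℂ) 2, ‖G z‖ ≤ C :=
    (isCompact_closedBall (0 : ℂ) 2).exists_bound_of_continuousOn
      hdiffG.continuous.continuousOn
  have hb : Bornology.IsBounded (Set.range G) := by
    rw [isBounded_iff_forall_norm_le]
    refine ⟨max C ‖g‖, ?_⟩
    rintro _ ⟨z, rfl⟩
    by_cases hz : ‖z‖ ≤ 2
    · exact le_max_of_le_left (hC z (by simpa [Metric.mem_closedBall, dist_eq_norm] using hz))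
    · push_neg at hz
      refine le_max_of_le_right ((hGb z (by linarith)).trans ?_)
      exact div_le_self (norm_nonneg g) (by linarith)
  have hconst : ∀ z w : ℂ, G z = G w := fun z w =>
    hdiffG.apply_eq_apply_of_bounded hb z w
  have htend : Filter.Tendsto (fun r : ℝ => ‖g‖ / (r - 1)) Filter.atTop (nhds 0) :=
    Filter.Tendsto.div_atTop tendsto_const_nhds
      (Filter.tendsto_atTop_add_const_right _ (-1) Filter.tendsto_id)
  have hle : ∀ᶠ r : ℝ in Filter.atTop, ‖G 2‖ ≤ ‖g‖ / (r - 1) := by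
    rw [Filter.eventually_atTop]
    refine ⟨2, fun r hr => ?_⟩
    have hnr : (1 : ℝ) < ‖(r : ℂ)‖ := by
      rw [Complex.norm_real, Real.norm_eq_abs, abs_of_pos (by linarith)]
      linarith
    have := hGb (r : ℂ) hnr
    rw [hconst 2 (r : ℂ)]
    refine this.trans (le_of_eq ?_)
    congr 1
    rw [Complex.norm_real, Real.norm_eq_abs, abs_of_pos (by linarith)]
  have hG2 : G 2 = 0 := by
    have : ‖G 2‖ ≤ 0 := ge_of_tendsto htend hle
    simpa using norm_le_zero_iff.mp this
  have h2ne : ‖(2 : ℂ)‖ ≠ 1 := by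
    rw [show ((2 : ℂ)) = ((2 : ℝ) : ℂ) by norm_num, Complex.norm_real]
    rw [Real.norm_eq_abs, abs_of_pos (by norm_num)]
    norm_num
  have hres0 : resolvent (transOp X) (2 : ℂ) g = 0 := (hGval 2 h2ne).symm.trans hG2
  have hfinal := sub_apply_resolvent g (2 : ℂ) h2ne
  rw [hres0, map_zero] at hfinal
  exact hfinal.symm

end
end

section
/- Let Q : ℝ → L(X) be a family of bounded linear operators with Q(t+1) = Q(t) for all t and t ↦ Q(t)x continuous for each x ∈ X, and let 𝓠 denote the operator of multiplication by Q(t) on BC(ℝ,X), (𝓠g)(t) = Q(t)g(t). Then for every g ∈ BC(ℝ,X) the circular spectrum satisfies σ(𝓠g) ⊂ σ(g). -/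
open MeasureTheory Complex Metric BoundedContinuousFunction

noncomputable section

variable (X : Type*) [NormedAddCommGroup X] [NormedSpace ℂ X] [CompleteSpace X]

variable {X}

lemma commute_ringInverse_right {A : Type*} [Ring A] {a b : A} (h : Commute a b) :
    Commute a (Ring.inverse b) := by
  by_cases hb : IsUnit b
  · obtain ⟨u, rfl⟩ := hb
    rw [Ring.inverse_unit]
    exact h.units_inv_right
  · rw [Ring.inverse_non_unit _ hb]
    exact Commute.zero_right a

lemma smQ_simple (Q : ℝ → X →L[ℂ] X) (hQcont : ∀ x : X, Continuous fun t : ℝ => Q t x)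
    (φ : SimpleFunc ℝ X) : StronglyMeasurable fun t => Q t (φ t) := by
  refine MeasureTheory.SimpleFunc.induction
    (motive := fun φ : SimpleFunc ℝ X => StronglyMeasurable fun t => Q t (φ t)) ?_ ?_ φ
  · intro c s hs
    have hfun : (fun t => Q t ((SimpleFunc.piecewise s hs (SimpleFunc.const _ c)
        (SimpleFunc.const _ 0)) t)) = s.indicator fun t => Q t c := by
      ext t
      by_cases ht : t ∈ s <;>
        simp [SimpleFunc.piecewise_apply, ht, Set.indicator_of_mem, Set.indicator_of_notMem]
    rw [hfun]
    exact ((hQcont c).stronglyMeasurable).indicator hs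
  · intro φ ψ hdis hφ hψ
    have hfun : (fun t => Q t ((φ + ψ) t)) = fun t => Q t (φ t) + Q t (ψ t) := by
      ext t; simp
    rw [hfun]
    exact hφ.add hψ

lemma smQ (Q : ℝ → X →L[ℂ] X) (hQcont : ∀ x : X, Continuous fun t : ℝ => Q t x)
    {f : ℝ → X} (hf : StronglyMeasurable f) :
    StronglyMeasurable fun t => Q t (f t) := by
  refine stronglyMeasurable_of_tendsto (f := fun n t => Q t (hf.approx n t)) Filter.atTop
    (fun n => smQ_simple Q hQcont (hf.approx n)) ?_
  refine tendsto_pi_nhds.mpr fun t => ?_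
  exact ((Q t).continuous.tendsto _).comp (hf.tendsto_approx t)

lemma aesmQ (Q : ℝ → X →L[ℂ] X) (hQcont : ∀ x : X, Continuous fun t : ℝ => Q t x)
    {f : ℝ → X} (hf : AEStronglyMeasurable f (volume : Measure ℝ)) :
    AEStronglyMeasurable (fun t => Q t (f t)) (volume : Measure ℝ) :=
  ⟨fun t => Q t (hf.mk f t), smQ Q hQcont hf.stronglyMeasurable_mk, by
    filter_upwards [hf.ae_eq_mk] with t ht using by rw [ht]⟩

lemma Qbound (Q : ℝ → X →L[ℂ] X) (hQper : ∀ t : ℝ, Q (t + 1) = Q t)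
    (hQcont : ∀ x : X, Continuous fun t : ℝ => Q t x) :
    ∃ C : ℝ, 0 ≤ C ∧ ∀ t, ‖Q t‖ ≤ C := by
  have hpb : ∀ x : X, ∃ C, ∀ s : Set.Icc (0:ℝ) 1, ‖Q s x‖ ≤ C := by
    intro x
    obtain ⟨C, hC⟩ := (isCompact_Icc (a := (0:ℝ)) (b := 1)).exists_bound_of_continuousOn
      ((hQcont x).continuousOn)
    exact ⟨C, fun s => hC s s.2⟩
  obtain ⟨C', hC'⟩ := banach_steinhaus hpb
  refine ⟨max C' 0, le_max_right _ _, fun t => ?_⟩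
  have hper : Function.Periodic Q 1 := hQper
  have hfr : Q t = Q (Int.fract t) := by
    have := hper.sub_int_mul_eq (x := t) ⌊t⌋
    rw [mul_one] at this
    rw [Int.fract, this]
  rw [hfr]
  have hmem : Int.fract t ∈ Set.Icc (0:ℝ) 1 :=
    ⟨Int.fract_nonneg t, (Int.fract_lt_one t).le⟩
  exact le_trans (hC' ⟨Int.fract t, hmem⟩) (le_max_left _ _)

lemma ae_le_norm_linf (g : Linf X) : ∀ᵐ t ∂(volume : Measure ℝ), ‖g t‖ ≤ ‖g‖ := by
  have hne : eLpNormEssSup (g : ℝ → X) volume ≠ ⊤ := by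
    have h := Lp.eLpNorm_lt_top g
    rw [eLpNorm_exponent_top] at h
    exact h.ne
  filter_upwards [ae_le_eLpNormEssSup (f := (g : ℝ → X)) (μ := volume)] with t ht
  rw [Lp.norm_def, eLpNorm_exponent_top]
  calc ‖g t‖ = ((‖g t‖₊ : ENNReal)).toReal := by simp
  _ ≤ (eLpNormEssSup (g : ℝ → X) volume).toReal := ENNReal.toReal_mono hne ht

lemma memQ (Q : ℝ → X →L[ℂ] X) (hQcont : ∀ x : X, Continuous fun t : ℝ => Q t x)
    {C : ℝ} (hC : ∀ t, ‖Q t‖ ≤ C) (g : Linf X) :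
    MemLp (fun t => Q t (g t)) ⊤ (volume : Measure ℝ) := by
  refine memLp_top_of_bound (aesmQ Q hQcont (Lp.aestronglyMeasurable g)) (C * ‖g‖) ?_
  filter_upwards [ae_le_norm_linf g] with t ht
  calc ‖Q t (g t)‖ ≤ ‖Q t‖ * ‖g t‖ := (Q t).le_opNorm _
  _ ≤ C * ‖g‖ := by
      have h0 : (0:ℝ) ≤ ‖Q t‖ := norm_nonneg _
      exact mul_le_mul (hC t) ht (norm_nonneg _) (le_trans h0 (hC t))

/-- Multiplication by `Q t` as a continuous linear operator on `L^∞`. -/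
def multOp (Q : ℝ → X →L[ℂ] X) (hQcont : ∀ x : X, Continuous fun t : ℝ => Q t x)
    {C : ℝ} (hC0 : 0 ≤ C) (hC : ∀ t, ‖Q t‖ ≤ C) : Linf X →L[ℂ] Linf X :=
  LinearMap.mkContinuous
    { toFun := fun g => (memQ Q hQcont hC g).toLp (fun t => Q t (g t))
      map_add' := fun g h => by
        refine Lp.ext ?_
        filter_upwards [MemLp.coeFn_toLp (memQ Q hQcont hC (g + h)),
          MemLp.coeFn_toLp (memQ Q hQcont hC g), MemLp.coeFn_toLp (memQ Q hQcont hC h),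
          Lp.coeFn_add g h,
          Lp.coeFn_add ((memQ Q hQcont hC g).toLp _) ((memQ Q hQcont hC h).toLp _)]
          with t h1 h2 h3 h4 h5
        simp only [h1, h5, h4, Pi.add_apply, map_add, h2, h3]
      map_smul' := fun c g => by
        refine Lp.ext ?_
        filter_upwards [MemLp.coeFn_toLp (memQ Q hQcont hC (c • g)),
          MemLp.coeFn_toLp (memQ Q hQcont hC g),
          Lp.coeFn_smul c g,
          Lp.coeFn_smul c ((memQ Q hQcont hC g).toLp (fun t => Q t (g t)))]
          with t h1 h2 h3 h4
        simp only [RingHom.id_apply, h1, h4, h3, Pi.smul_apply, h2,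
          ContinuousLinearMap.map_smul] }
    C
    (fun g => by
      have : ‖(memQ Q hQcont hC g).toLp (fun t => Q t (g t))‖ ≤ C * ‖g‖ := by
        rw [Lp.norm_toLp _ (memQ Q hQcont hC g)]
        refine ENNReal.toReal_le_of_le_ofReal (by positivity) ?_
        rw [eLpNorm_exponent_top]
        refine eLpNormEssSup_le_of_ae_bound ?_
        filter_upwards [ae_le_norm_linf g] with t ht
        calc ‖Q t (g t)‖ ≤ ‖Q t‖ * ‖g t‖ := (Q t).le_opNorm _
        _ ≤ C * ‖g‖ := mul_le_mul (hC t) ht (norm_nonneg _) hC0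
      exact this)

lemma multOp_coeFn (Q : ℝ → X →L[ℂ] X) (hQcont : ∀ x : X, Continuous fun t : ℝ => Q t x)
    {C : ℝ} (hC0 : 0 ≤ C) (hC : ∀ t, ‖Q t‖ ≤ C) (g : Linf X) :
    (multOp Q hQcont hC0 hC g : ℝ → X) =ᵐ[volume] fun t => Q t (g t) :=
  MemLp.coeFn_toLp (memQ Q hQcont hC g)

lemma bcToLinf_coeFn (f : ℝ →ᵇ X) : ((bcToLinf X f : Linf X) : ℝ → X) =ᵐ[volume] f := by
  unfold bcToLinf
  exact MemLp.coeFn_toLp _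

lemma multOp_comm_transOp (Q : ℝ → X →L[ℂ] X) (hQper : ∀ t : ℝ, Q (t + 1) = Q t)
    (hQcont : ∀ x : X, Continuous fun t : ℝ => Q t x)
    {C : ℝ} (hC0 : 0 ≤ C) (hC : ∀ t, ‖Q t‖ ≤ C) :
    Commute (multOp Q hQcont hC0 hC) (transOp X) := by
  have hT : ∀ h : Linf X, ((transOp X h : Linf X) : ℝ → X)
      =ᵐ[volume] (h : ℝ → X) ∘ (fun t => t + 1) :=
    fun h => Lp.coeFn_compMeasurePreserving h _
  refine ContinuousLinearMap.ext fun g => ?_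
  rw [ContinuousLinearMap.mul_apply, ContinuousLinearMap.mul_apply]
  refine Lp.ext ?_
  have qmp := (measurePreserving_add_right (volume : Measure ℝ) 1).quasiMeasurePreserving
  have h1 := multOp_coeFn Q hQcont hC0 hC (transOp X g)
  have h2 := hT g
  have h2' : (fun t => Q t (((transOp X) g : ℝ → X) t))
      =ᵐ[volume] fun t => Q t (g (t + 1)) := by
    filter_upwards [h2] with t e2
    rw [e2]; rfl
  have h3 := hT (multOp Q hQcont hC0 hC g)
  have h4 := (multOp_coeFn Q hQcont hC0 hC g).comp_tendsto qmp.tendsto_ae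
  filter_upwards [h1, h2', h3, h4] with t e1 e2 e3 e4
  rw [e1, e2, e3, e4]
  simp only [Function.comp_apply]
  rw [hQper t]

variable (X)

/-- for a 1-periodic strongly continuous family `Q(t)` of bounded operators and
`g ∈ BC(ℝ,X)`, the function `(𝓠 g)(t) = Q(t) g(t)` satisfies `σ(𝓠 g) ⊆ σ(g)`. -/
theorem stmt11 (Q : ℝ → X →L[ℂ] X) (hQper : ∀ t : ℝ, Q (t + 1) = Q t)
    (hQcont : ∀ x : X, Continuous fun t : ℝ => Q t x)
    (g Qg : ℝ →ᵇ X) (hQg : ∀ t : ℝ, Qg t = Q t (g t)) :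
    circSpec X (bcToLinf X Qg) ⊆ circSpec X (bcToLinf X g) := by
  obtain ⟨C, hC0, hC⟩ := Qbound Q hQper hQcont
  set M := multOp Q hQcont hC0 hC with hMdef
  have hcommS : Commute M (transOp X) := multOp_comm_transOp Q hQper hQcont hC0 hC
  have hres : ∀ lam : ℂ, Commute M (resolvent (transOp X) lam) := by
    intro lam
    have h1 : Commute M (algebraMap ℂ (Linf X →L[ℂ] Linf X) lam) :=
      (Algebra.commutes lam M).symm
    exact commute_ringInverse_right (h1.sub_right hcommS)
  have hMapply : ∀ (lam : ℂ) (h : Linf X),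
      M (resolvent (transOp X) lam h) = resolvent (transOp X) lam (M h) := by
    intro lam h
    rw [← ContinuousLinearMap.mul_apply, (hres lam).eq, ContinuousLinearMap.mul_apply]
  have hMbc : M (bcToLinf X g) = bcToLinf X Qg := by
    refine Lp.ext ?_
    filter_upwards [multOp_coeFn Q hQcont hC0 hC (bcToLinf X g),
      bcToLinf_coeFn g, bcToLinf_coeFn Qg] with t e1 e2 e3
    rw [e1, e2, e3, hQg t]
  intro ξ hξ
  obtain ⟨hξ1, hξ2⟩ := hξ
  refine ⟨hξ1, fun hex => hξ2 ?_⟩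
  obtain ⟨U, F, hU, hξU, hF, hFr⟩ := hex
  refine ⟨U, fun lam => M (F lam), hU, hξU, M.comp_analyticOnNhd hF, ?_⟩
  intro lam hlam hnorm
  show M (F lam) = _
  rw [hFr lam hlam hnorm, hMapply lam, hMbc]


end
end

section
/- Let B : ℝ → L(X) be a family of bounded linear operators with B(t+1) = B(t) for all t and t ↦ B(t)x continuous for each x ∈ X, let 𝓑 denote the bounded operator of multiplication by B(t) on BC(ℝ,X), and let Λ be a closed subset of the unit circle Γ. Set Λ_{BC}(X) := { g ∈ BC(ℝ,X) : σ(g) ⊂ Λ }. Then 𝓑 leaves Λ_{BC}(X) invariant, and the spectrum of the restriction satisfies σ(𝓑|_{Λ_{BC}(X)}) ⊂ σ(𝓑), where σ(𝓑) is the spectrum of 𝓑 on BC(ℝ,X). -/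
open MeasureTheory Complex Metric BoundedContinuousFunction
open scoped ENNReal NNReal

noncomputable section

variable (X : Type*) [NormedAddCommGroup X] [NormedSpace ℂ X] [CompleteSpace X]

namespace Stmt12Aux

variable {X}

lemma sm_simple (A : ℝ → X →L[ℂ] X) (hA : ∀ x, Continuous fun t => A t x)
    (s : SimpleFunc ℝ X) : StronglyMeasurable fun t => A t (s t) := by
  classical
  induction s using SimpleFunc.induction with
  | const c hs =>
    rename_i s
    have he : (fun t => A t ((SimpleFunc.piecewise s hs (SimpleFunc.const _ c)
        (SimpleFunc.const _ 0)) t)) = fun t => Set.indicator s (fun u => A u c) t := by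
      funext t
      rw [SimpleFunc.piecewise_apply, Set.indicator_apply]
      split_ifs <;> simp
    rw [he]
    exact ((hA c).stronglyMeasurable).indicator hs
  | add hd hf hg =>
    rename_i f g
    have he : (fun t => A t ((f + g) t)) = fun t => A t (f t) + A t (g t) := by
      funext t; simp
    rw [he]; exact hf.add hg

lemma aesm_mul (A : ℝ → X →L[ℂ] X) (hA : ∀ x, Continuous fun t => A t x)
    {f : ℝ → X} (hf : AEStronglyMeasurable f (volume : Measure ℝ)) :
    AEStronglyMeasurable (fun t => A t (f t)) (volume : Measure ℝ) := by
  obtain ⟨f', hf', hff'⟩ := hf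
  refine ⟨fun t => A t (f' t), ?_, hff'.mono fun t ht => by simp only [ht]⟩
  refine stronglyMeasurable_of_tendsto (f := fun n t => A t (hf'.approx n t)) Filter.atTop
    (fun n => sm_simple A hA _) ?_
  rw [tendsto_pi_nhds]
  exact fun t => ((A t).continuous.tendsto _).comp (hf'.tendsto_approx t)

lemma linf_ae_norm_le (f : Linf X) : ∀ᵐ t : ℝ, ‖f t‖ ≤ ‖f‖ := by
  have h := ae_le_eLpNormEssSup (f := ⇑f) (μ := (volume : Measure ℝ))
  have hfin : eLpNormEssSup ⇑f volume ≠ ⊤ := by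
    have := Lp.eLpNorm_ne_top f
    rwa [eLpNorm_exponent_top] at this
  filter_upwards [h] with t ht
  have h2 : ((‖f t‖₊ : ℝ≥0∞)).toReal ≤ (eLpNormEssSup (⇑f) volume).toReal :=
    ENNReal.toReal_mono hfin ht
  simpa [Lp.norm_def, eLpNorm_exponent_top] using h2

lemma mem_mul (A : ℝ → X →L[ℂ] X) (hA : ∀ x, Continuous fun t => A t x)
    (M : ℝ) (hbd : ∀ t x, ‖A t x‖ ≤ M * ‖x‖) (hM : 0 ≤ M) (f : Linf X) :
    MemLp (fun t => A t (f t)) ⊤ (volume : Measure ℝ) :=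
  memLp_top_of_bound (aesm_mul A hA (Lp.aestronglyMeasurable f)) (M * ‖f‖)
    ((linf_ae_norm_le f).mono fun t ht =>
      (hbd t (f t)).trans (mul_le_mul_of_nonneg_left ht hM))

def multLinf (A : ℝ → X →L[ℂ] X) (hA : ∀ x, Continuous fun t => A t x)
    (M : ℝ) (hbd : ∀ t x, ‖A t x‖ ≤ M * ‖x‖) (hM : 0 ≤ M) : Linf X →L[ℂ] Linf X :=
  LinearMap.mkContinuous
    { toFun := fun f => (mem_mul A hA M hbd hM f).toLp _
      map_add' := fun f g => by
        apply Lp.ext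
        filter_upwards [MemLp.coeFn_toLp (mem_mul A hA M hbd hM (f + g)),
          Lp.coeFn_add ((mem_mul A hA M hbd hM f).toLp _) ((mem_mul A hA M hbd hM g).toLp _),
          MemLp.coeFn_toLp (mem_mul A hA M hbd hM f),
          MemLp.coeFn_toLp (mem_mul A hA M hbd hM g),
          Lp.coeFn_add f g] with t e1 e2 e3 e4 e5
        rw [e1, e2]
        simp only [Pi.add_apply]
        rw [e3, e4, e5, Pi.add_apply, map_add]
      map_smul' := fun c f => by
        apply Lp.ext
        filter_upwards [MemLp.coeFn_toLp (mem_mul A hA M hbd hM (c • f)),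
          Lp.coeFn_smul c ((mem_mul A hA M hbd hM f).toLp _),
          MemLp.coeFn_toLp (mem_mul A hA M hbd hM f),
          Lp.coeFn_smul c f] with t e1 e2 e3 e4
        rw [e1, RingHom.id_apply, e2]
        simp only [Pi.smul_apply]
        rw [e3, e4, Pi.smul_apply, _root_.map_smul] }
    M (fun f => by
      simp only [LinearMap.coe_mk, AddHom.coe_mk]
      rw [Lp.norm_toLp _ (mem_mul A hA M hbd hM f)]
      refine ENNReal.toReal_le_of_le_ofReal (by positivity) ?_
      rw [eLpNorm_exponent_top]
      exact eLpNormEssSup_le_of_ae_bound ((linf_ae_norm_le f).mono fun t ht =>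
        (hbd t (f t)).trans (mul_le_mul_of_nonneg_left ht hM)))

lemma multLinf_coeFn (A : ℝ → X →L[ℂ] X) (hA : ∀ x, Continuous fun t => A t x)
    (M : ℝ) (hbd : ∀ t x, ‖A t x‖ ≤ M * ‖x‖) (hM : 0 ≤ M) (f : Linf X) :
    ⇑(multLinf A hA M hbd hM f) =ᵐ[(volume : Measure ℝ)] fun t => A t (f t) :=
  MemLp.coeFn_toLp (mem_mul A hA M hbd hM f)

lemma transOp_coeFn (g : Linf X) :
    ⇑(transOp X g) =ᵐ[(volume : Measure ℝ)] fun t => g (t + 1) :=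
  Lp.coeFn_compMeasurePreserving g (measurePreserving_add_right volume 1)

lemma multLinf_comm_transOp (A : ℝ → X →L[ℂ] X) (hper : ∀ t, A (t + 1) = A t)
    (hA : ∀ x, Continuous fun t => A t x)
    (M : ℝ) (hbd : ∀ t x, ‖A t x‖ ≤ M * ‖x‖) (hM : 0 ≤ M) :
    Commute (multLinf A hA M hbd hM) (transOp X) := by
  rw [Commute, SemiconjBy, ContinuousLinearMap.mul_def, ContinuousLinearMap.mul_def]
  ext f
  have h1 : ⇑(multLinf A hA M hbd hM (transOp X f))
      =ᵐ[(volume : Measure ℝ)] fun t => A t ((transOp X f) t) :=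
    multLinf_coeFn A hA M hbd hM _
  have h2 : (fun t => A t ((transOp X f) t))
      =ᵐ[(volume : Measure ℝ)] fun t => A t (f (t + 1)) :=
    (transOp_coeFn f).mono fun t ht => by simp only [ht]
  have h3 : ⇑(transOp X (multLinf A hA M hbd hM f))
      =ᵐ[(volume : Measure ℝ)] (⇑(multLinf A hA M hbd hM f)) ∘ (fun t => t + 1) :=
    Lp.coeFn_compMeasurePreserving _ (measurePreserving_add_right volume 1)
  have h4 : ((⇑(multLinf A hA M hbd hM f)) ∘ (fun t : ℝ => t + 1))
      =ᵐ[(volume : Measure ℝ)] ((fun t => A t (f t)) ∘ (fun t : ℝ => t + 1)) :=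
    (measurePreserving_add_right volume 1).quasiMeasurePreserving.ae_eq_comp
      (multLinf_coeFn A hA M hbd hM f)
  filter_upwards [h1, h2, h3, h4] with t e1 e2 e3 e4
  simp only [ContinuousLinearMap.comp_apply]
  rw [e1, e2, e3, e4]
  simp only [Function.comp_apply, hper t]

lemma commute_ring_inverse {R : Type*} [Ring R] {a b : R} (h : Commute a b) :
    Commute a (Ring.inverse b) := by
  by_cases hb : IsUnit b
  · obtain ⟨u, rfl⟩ := hb
    rw [Ring.inverse_unit]
    exact h.units_inv_right
  · rw [Ring.inverse_non_unit _ hb]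
    exact Commute.zero_right _

lemma commute_resolvent {E : Type*} [NormedAddCommGroup E] [NormedSpace ℂ E]
    {a b : E →L[ℂ] E} (h : Commute a b) (lam : ℂ) :
    Commute a (resolvent b lam) := by
  have h1 : Commute a ((algebraMap ℂ (E →L[ℂ] E)) lam) := (Algebra.commutes lam a).symm
  exact commute_ring_inverse (h1.sub_right h)

lemma bcToLinf_coeFn (g : ℝ →ᵇ X) : ⇑(bcToLinf X g) =ᵐ[(volume : Measure ℝ)] ⇑g :=
  MemLp.coeFn_toLp _

lemma bcToLinf_add (g h : ℝ →ᵇ X) :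
    bcToLinf X (g + h) = bcToLinf X g + bcToLinf X h := by
  apply Lp.ext
  filter_upwards [bcToLinf_coeFn (g + h), Lp.coeFn_add (bcToLinf X g) (bcToLinf X h),
    bcToLinf_coeFn g, bcToLinf_coeFn h] with t e1 e2 e3 e4
  rw [e1, e2, Pi.add_apply, e3, e4]
  simp

lemma bcToLinf_smul (c : ℂ) (g : ℝ →ᵇ X) :
    bcToLinf X (c • g) = c • bcToLinf X g := by
  apply Lp.ext
  filter_upwards [bcToLinf_coeFn (c • g), Lp.coeFn_smul c (bcToLinf X g),
    bcToLinf_coeFn g] with t e1 e2 e3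
  rw [e1, e2, Pi.smul_apply, e3]
  simp

lemma bcToLinf_zero : bcToLinf X (0 : ℝ →ᵇ X) = 0 := by
  apply Lp.ext
  filter_upwards [bcToLinf_coeFn (X := X) 0, Lp.coeFn_zero X ⊤ (volume : Measure ℝ)]
    with t e1 e2
  rw [e1, e2]
  simp

lemma not_mem_circSpec {g : Linf X} {ξ : ℂ} (hn : ‖ξ‖ = 1) (hξ : ξ ∉ circSpec X g) :
    ∃ (U : Set ℂ) (F : ℂ → Linf X), IsOpen U ∧ ξ ∈ U ∧
      AnalyticOnNhd ℂ F U ∧ ∀ lam ∈ U, ‖lam‖ ≠ 1 → F lam = resolvent (transOp X) lam g := by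
  rw [circSpec, Set.mem_setOf_eq] at hξ
  exact not_not.mp (not_and.mp hξ hn)

lemma circSpec_zero : circSpec X (0 : Linf X) = ∅ := by
  ext ξ
  simp only [Set.mem_empty_iff_false, iff_false]
  rintro ⟨h1, h2⟩
  exact h2 ⟨Set.univ, fun _ => 0, isOpen_univ, trivial, analyticOnNhd_const,
    fun lam _ _ => (map_zero (resolvent (transOp X) lam)).symm⟩

lemma circSpec_add (g h : Linf X) :
    circSpec X (g + h) ⊆ circSpec X g ∪ circSpec X h := by
  intro ξ hξ
  by_contra hn
  simp only [Set.mem_union, not_or] at hn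
  obtain ⟨U, F, hU, hξU, hF, hFeq⟩ := not_mem_circSpec hξ.1 hn.1
  obtain ⟨V, G, hV, hξV, hG, hGeq⟩ := not_mem_circSpec hξ.1 hn.2
  refine hξ.2 ⟨U ∩ V, fun z => F z + G z, hU.inter hV, ⟨hξU, hξV⟩,
    fun z hz => (hF z hz.1).add (hG z hz.2), fun lam hlam hnorm => ?_⟩
  show F lam + G lam = _
  rw [hFeq lam hlam.1 hnorm, hGeq lam hlam.2 hnorm, ← map_add]

lemma circSpec_smul (c : ℂ) (g : Linf X) : circSpec X (c • g) ⊆ circSpec X g := by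
  intro ξ hξ
  by_contra hn
  obtain ⟨U, F, hU, hξU, hF, hFeq⟩ := not_mem_circSpec hξ.1 hn
  refine hξ.2 ⟨U, fun z => (c • ContinuousLinearMap.id ℂ (Linf X)) (F z), hU, hξU,
    fun z hz => ((c • ContinuousLinearMap.id ℂ (Linf X)).analyticAt (F z)).comp (hF z hz),
    fun lam hlam hnorm => ?_⟩
  show (c • ContinuousLinearMap.id ℂ (Linf X)) (F lam) = _
  rw [hFeq lam hlam hnorm]
  simp only [ContinuousLinearMap.smul_apply, ContinuousLinearMap.id_apply]
  rw [← _root_.map_smul]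

lemma circSpec_comp (A : ℝ → X →L[ℂ] X) (hper : ∀ t, A (t + 1) = A t)
    (hA : ∀ x, Continuous fun t => A t x) (M : ℝ)
    (hbd : ∀ t x, ‖A t x‖ ≤ M * ‖x‖) (hM : 0 ≤ M)
    (T : (ℝ →ᵇ X) →L[ℂ] (ℝ →ᵇ X)) (hT : ∀ g t, T g t = A t (g t)) (g : ℝ →ᵇ X) :
    circSpec X (bcToLinf X (T g)) ⊆ circSpec X (bcToLinf X g) := by
  set 𝒜 := multLinf A hA M hbd hM with h𝒜
  have hAJ : 𝒜 (bcToLinf X g) = bcToLinf X (T g) := by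
    apply Lp.ext
    filter_upwards [multLinf_coeFn A hA M hbd hM (bcToLinf X g),
      (bcToLinf_coeFn g), bcToLinf_coeFn (T g)] with t e1 e2 e3
    rw [← h𝒜] at e1
    rw [e1, e2, e3, hT]
  intro ξ hξ
  refine ⟨hξ.1, fun hex => hξ.2 ?_⟩
  obtain ⟨U, F, hU, hξU, hF, hFeq⟩ := hex
  refine ⟨U, fun z => 𝒜 (F z), hU, hξU,
    fun z hz => (𝒜.analyticAt (F z)).comp (hF z hz), fun lam hlam hnorm => ?_⟩
  show 𝒜 (F lam) = _
  rw [hFeq lam hlam hnorm]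
  have hc : Commute 𝒜 (resolvent (transOp X) lam) :=
    commute_resolvent (multLinf_comm_transOp A hper hA M hbd hM) lam
  calc 𝒜 (resolvent (transOp X) lam (bcToLinf X g))
      = (𝒜 * resolvent (transOp X) lam) (bcToLinf X g) :=
        (ContinuousLinearMap.mul_apply _ _ _).symm
    _ = (resolvent (transOp X) lam * 𝒜) (bcToLinf X g) := by rw [hc.eq]
    _ = resolvent (transOp X) lam (𝒜 (bcToLinf X g)) :=
        ContinuousLinearMap.mul_apply _ _ _
    _ = resolvent (transOp X) lam (bcToLinf X (T g)) := by rw [hAJ]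

lemma eval_resolvent_elt (B : ℝ → X →L[ℂ] X)
    (𝓑 : (ℝ →ᵇ X) →L[ℂ] (ℝ →ᵇ X)) (h𝓑 : ∀ (g : ℝ →ᵇ X) (t : ℝ), 𝓑 g t = B t (g t))
    (lam : ℂ) (h : ℝ →ᵇ X) (t : ℝ) :
    ((algebraMap ℂ ((ℝ →ᵇ X) →L[ℂ] (ℝ →ᵇ X)) lam - 𝓑) h) t = lam • h t - B t (h t) := by
  rw [ContinuousLinearMap.sub_apply, BoundedContinuousFunction.sub_apply,
    Algebra.algebraMap_eq_smul_one, ContinuousLinearMap.smul_apply,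
    ContinuousLinearMap.one_apply, BoundedContinuousFunction.smul_apply, h𝓑]

lemma inj_pointwise (B : ℝ → X →L[ℂ] X) (hBcont : ∀ x : X, Continuous fun t : ℝ => B t x)
    (𝓑 : (ℝ →ᵇ X) →L[ℂ] (ℝ →ᵇ X)) (h𝓑 : ∀ (g : ℝ →ᵇ X) (t : ℝ), 𝓑 g t = B t (g t))
    (lam : ℂ) (hu : IsUnit (algebraMap ℂ ((ℝ →ᵇ X) →L[ℂ] (ℝ →ᵇ X)) lam - 𝓑))
    (t₀ : ℝ) (x : X) (hx : lam • x - B t₀ x = 0) : x = 0 := by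
  set T : (ℝ →ᵇ X) →L[ℂ] (ℝ →ᵇ X) := ↑hu.unit⁻¹ with hT
  have hvu : ∀ g : ℝ →ᵇ X, T ((algebraMap ℂ ((ℝ →ᵇ X) →L[ℂ] (ℝ →ᵇ X)) lam - 𝓑) g) = g := by
    intro g
    calc T ((algebraMap ℂ ((ℝ →ᵇ X) →L[ℂ] (ℝ →ᵇ X)) lam - 𝓑) g)
        = T ((hu.unit : (ℝ →ᵇ X) →L[ℂ] (ℝ →ᵇ X)) g) := by rw [IsUnit.unit_spec]
      _ = ((↑hu.unit⁻¹ * ↑hu.unit : (ℝ →ᵇ X) →L[ℂ] (ℝ →ᵇ X))) g := by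
          rw [ContinuousLinearMap.mul_apply]
      _ = g := by rw [Units.inv_mul]; exact ContinuousLinearMap.one_apply g
  have key : ∀ ε : ℝ, 0 < ε → ‖x‖ ≤ ‖T‖ * ε := by
    intro ε hε
    have hψ : Continuous fun t => lam • x - B t x := continuous_const.sub (hBcont x)
    obtain ⟨δ, hδ, hδ2⟩ := Metric.continuousAt_iff.mp (hψ.continuousAt (x := t₀)) ε hε
    have hφc : Continuous fun t : ℝ => max 0 (1 - dist t t₀ / δ) :=
      continuous_const.max (continuous_const.sub
        ((continuous_id.dist continuous_const).div_const δ))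
    have hφ0 : ∀ t, 0 ≤ max 0 (1 - dist t t₀ / δ) := fun t => le_max_left _ _
    have hφ1 : ∀ t, max 0 (1 - dist t t₀ / δ) ≤ 1 := by
      intro t
      apply max_le zero_le_one
      have : 0 ≤ dist t t₀ / δ := div_nonneg dist_nonneg hδ.le
      linarith
    set G : ℝ →ᵇ X := BoundedContinuousFunction.ofNormedAddCommGroup
      (fun t => max 0 (1 - dist t t₀ / δ) • x) (hφc.smul continuous_const) ‖x‖
      (fun t => by
        rw [norm_smul, Real.norm_eq_abs, _root_.abs_of_nonneg (hφ0 t)]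
        nlinarith [norm_nonneg x, hφ0 t, hφ1 t]) with hG
    have hGt : ∀ t, G t = max 0 (1 - dist t t₀ / δ) • x := fun t => rfl
    have hGnorm : ‖(algebraMap ℂ ((ℝ →ᵇ X) →L[ℂ] (ℝ →ᵇ X)) lam - 𝓑) G‖ ≤ ε := by
      rw [BoundedContinuousFunction.norm_le hε.le]
      intro t
      rw [eval_resolvent_elt B 𝓑 h𝓑, hGt t, ContinuousLinearMap.map_smul_of_tower,
        smul_comm lam, ← smul_sub, norm_smul, Real.norm_eq_abs, _root_.abs_of_nonneg (hφ0 t)]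
      by_cases hd : dist t t₀ < δ
      · have h2 := hδ2 hd
        rw [hx, dist_zero_right] at h2
        nlinarith [hφ0 t, hφ1 t, norm_nonneg (lam • x - B t x)]
      · have hle : 1 - dist t t₀ / δ ≤ 0 := by
          push_neg at hd
          have h3 : 1 ≤ dist t t₀ / δ := (one_le_div hδ).mpr hd
          linarith
        rw [max_eq_left hle]
        simp [hε.le]
    have hxG : x = G t₀ := by
      rw [hGt t₀, dist_self]
      norm_num
    have hGle : ‖G‖ ≤ ‖T‖ * ε := by
      conv_lhs => rw [← hvu G]
      exact le_trans (T.le_opNorm _) (mul_le_mul_of_nonneg_left hGnorm (norm_nonneg T))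
    calc ‖x‖ = ‖G t₀‖ := by rw [← hxG]
      _ ≤ ‖G‖ := G.norm_coe_le_norm t₀
      _ ≤ ‖T‖ * ε := hGle
  rw [← norm_le_zero_iff]
  by_contra hpos
  push_neg at hpos
  have h1 := key (‖x‖ / (2 * (‖T‖ + 1))) (by positivity)
  have h2 : 0 ≤ ‖T‖ := norm_nonneg _
  rw [div_eq_mul_inv] at h1
  have h3 : 0 < 2 * (‖T‖ + 1) := by positivity
  have h4 : ‖T‖ * (‖x‖ * (2 * (‖T‖ + 1))⁻¹) = ‖x‖ * (‖T‖ / (2 * (‖T‖ + 1))) := by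
    rw [div_eq_mul_inv]; ring
  have h5 : ‖T‖ / (2 * (‖T‖ + 1)) < 1 := (div_lt_one h3).mpr (by linarith)
  have h6 := mul_lt_mul_of_pos_left h5 hpos
  rw [h4] at h1
  rw [mul_one] at h6
  linarith

lemma transBCaux_apply (g : ℝ →ᵇ X) (t : ℝ) :
    g.compContinuous (⟨fun t => t + 1, by continuity⟩ : C(ℝ, ℝ)) t = g (t + 1) := rfl

lemma exists_pointwise_inverse (B : ℝ → X →L[ℂ] X) (hBper : ∀ t : ℝ, B (t + 1) = B t)
    (hBcont : ∀ x : X, Continuous fun t : ℝ => B t x)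
    (𝓑 : (ℝ →ᵇ X) →L[ℂ] (ℝ →ᵇ X)) (h𝓑 : ∀ (g : ℝ →ᵇ X) (t : ℝ), 𝓑 g t = B t (g t))
    (S : (ℝ →ᵇ X) →L[ℂ] (ℝ →ᵇ X)) (hS : ∀ (g : ℝ →ᵇ X) (t : ℝ), S g t = g (t + 1))
    (lam : ℂ) (hu : IsUnit (algebraMap ℂ ((ℝ →ᵇ X) →L[ℂ] (ℝ →ᵇ X)) lam - 𝓑)) :
    ∃ C : ℝ → X →L[ℂ] X, (∀ t, C (t + 1) = C t) ∧ (∀ x, Continuous fun t => C t x) ∧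
      (∀ t x, ‖C t x‖ ≤ ‖(↑hu.unit⁻¹ : (ℝ →ᵇ X) →L[ℂ] (ℝ →ᵇ X))‖ * ‖x‖) ∧
      (∀ g t, (↑hu.unit⁻¹ : (ℝ →ᵇ X) →L[ℂ] (ℝ →ᵇ X)) g t = C t (g t)) := by
  set T : (ℝ →ᵇ X) →L[ℂ] (ℝ →ᵇ X) := ↑hu.unit⁻¹ with hT
  have huv : ∀ g : ℝ →ᵇ X, (algebraMap ℂ ((ℝ →ᵇ X) →L[ℂ] (ℝ →ᵇ X)) lam - 𝓑) (T g) = g := by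
    intro g
    calc (algebraMap ℂ ((ℝ →ᵇ X) →L[ℂ] (ℝ →ᵇ X)) lam - 𝓑) (T g)
        = (hu.unit : (ℝ →ᵇ X) →L[ℂ] (ℝ →ᵇ X)) (T g) := by rw [IsUnit.unit_spec]
      _ = ((↑hu.unit * ↑hu.unit⁻¹ : (ℝ →ᵇ X) →L[ℂ] (ℝ →ᵇ X))) g := by
          rw [ContinuousLinearMap.mul_apply]
      _ = g := by rw [Units.mul_inv]; exact ContinuousLinearMap.one_apply g
  -- the pointwise operator family
  refine ⟨fun t => LinearMap.mkContinuous
    { toFun := fun x => (T (const ℝ x)) t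
      map_add' := fun x y => by
        show (T (const ℝ (x + y))) t = (T (const ℝ x)) t + (T (const ℝ y)) t
        have h0 : const ℝ (x + y) = const ℝ x + const ℝ y := by ext s; simp
        rw [h0, map_add, BoundedContinuousFunction.add_apply]
      map_smul' := fun c x => by
        show (T (const ℝ (c • x))) t = c • (T (const ℝ x)) t
        have h0 : const ℝ (c • x) = c • const ℝ x := by ext s; simp
        rw [h0, _root_.map_smul, BoundedContinuousFunction.smul_apply] }
    ‖T‖ (fun x => by
      refine le_trans ((T (const ℝ x)).norm_coe_le_norm t) ?_
      calc ‖T (const ℝ x)‖ ≤ ‖T‖ * ‖const ℝ x‖ := T.le_opNorm _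
        _ = ‖T‖ * ‖x‖ := by rw [norm_const_eq]), ?_, ?_, ?_, ?_⟩
  · -- periodicity
    intro t
    ext x
    simp only [LinearMap.mkContinuous_apply, LinearMap.coe_mk, AddHom.coe_mk]
    have hcommB : Commute S 𝓑 := by
      rw [Commute, SemiconjBy, ContinuousLinearMap.mul_def, ContinuousLinearMap.mul_def]
      ext g t'
      simp only [ContinuousLinearMap.comp_apply]
      rw [hS, h𝓑, h𝓑, hS, hBper]
    have halg : Commute S (algebraMap ℂ ((ℝ →ᵇ X) →L[ℂ] (ℝ →ᵇ X)) lam) :=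
      (Algebra.commutes lam S).symm
    have hcu : Commute S (hu.unit : (ℝ →ᵇ X) →L[ℂ] (ℝ →ᵇ X)) := by
      rw [IsUnit.unit_spec]
      exact halg.sub_right hcommB
    have hcT : Commute S T := hcu.units_inv_right
    have h1 : S (T (const ℝ x)) = T (S (const ℝ x)) := by
      calc S (T (const ℝ x)) = (S * T) (const ℝ x) :=
            (ContinuousLinearMap.mul_apply _ _ _).symm
        _ = (T * S) (const ℝ x) := by rw [hcT.eq]
        _ = T (S (const ℝ x)) := ContinuousLinearMap.mul_apply _ _ _
    have h2 : S (const ℝ x) = const ℝ x := by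
      ext s
      rw [hS]
      rfl
    calc (T (const ℝ x)) (t + 1) = (S (T (const ℝ x))) t := (hS _ t).symm
      _ = (T (S (const ℝ x))) t := by rw [h1]
      _ = (T (const ℝ x)) t := by rw [h2]
  · -- strong continuity
    intro x
    simp only [LinearMap.mkContinuous_apply, LinearMap.coe_mk, AddHom.coe_mk]
    exact (T (const ℝ x)).continuous
  · -- bound
    intro t x
    simp only [LinearMap.mkContinuous_apply, LinearMap.coe_mk, AddHom.coe_mk]
    refine le_trans ((T (const ℝ x)).norm_coe_le_norm t) ?_
    calc ‖T (const ℝ x)‖ ≤ ‖T‖ * ‖const ℝ x‖ := T.le_opNorm _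
      _ = ‖T‖ * ‖x‖ := by rw [norm_const_eq]
  · -- the pointwise identity
    intro g t₀
    simp only [LinearMap.mkContinuous_apply, LinearMap.coe_mk, AddHom.coe_mk]
    have hw : (algebraMap ℂ ((ℝ →ᵇ X) →L[ℂ] (ℝ →ᵇ X)) lam - 𝓑)
        (T g - T (const ℝ (g t₀))) = g - const ℝ (g t₀) := by
      rw [map_sub, huv, huv]
    have hw0 : lam • ((T g - T (const ℝ (g t₀))) t₀)
        - B t₀ ((T g - T (const ℝ (g t₀))) t₀) = 0 := by
      rw [← eval_resolvent_elt B 𝓑 h𝓑, hw, BoundedContinuousFunction.sub_apply]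
      simp
    have := inj_pointwise B hBcont 𝓑 h𝓑 lam hu t₀ _ hw0
    rw [BoundedContinuousFunction.sub_apply] at this
    have := sub_eq_zero.mp this
    rw [← this]


def LamBC (Λ : Set ℂ) : Submodule ℂ (ℝ →ᵇ X) where
  carrier := {g | circSpec X (bcToLinf X g) ⊆ Λ}
  add_mem' := fun {g h} hg hh => by
    show circSpec X (bcToLinf X (g + h)) ⊆ Λ
    rw [bcToLinf_add]
    exact (circSpec_add _ _).trans (Set.union_subset hg hh)
  zero_mem' := by
    show circSpec X (bcToLinf X 0) ⊆ Λ
    rw [bcToLinf_zero, circSpec_zero]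
    exact Set.empty_subset Λ
  smul_mem' := fun c g hg => by
    show circSpec X (bcToLinf X (c • g)) ⊆ Λ
    rw [bcToLinf_smul]
    exact (circSpec_smul c _).trans hg

end Stmt12Aux

open Stmt12Aux in
theorem stmt12 (B : ℝ → X →L[ℂ] X) (hBper : ∀ t : ℝ, B (t + 1) = B t)
    (hBcont : ∀ x : X, Continuous fun t : ℝ => B t x)
    (𝓑 : (ℝ →ᵇ X) →L[ℂ] (ℝ →ᵇ X)) (h𝓑 : ∀ (g : ℝ →ᵇ X) (t : ℝ), 𝓑 g t = B t (g t))
    (Λ : Set ℂ) (hΛclosed : IsClosed Λ) (hΛ : Λ ⊆ Metric.sphere (0 : ℂ) 1) :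
    ∃ p : Submodule ℂ (ℝ →ᵇ X),
      (p : Set (ℝ →ᵇ X)) = {g : ℝ →ᵇ X | circSpec X (bcToLinf X g) ⊆ Λ} ∧
      ∃ hinv : ∀ g ∈ p, 𝓑 g ∈ p,
        spectrum ℂ (restrictCLM 𝓑 p hinv) ⊆ spectrum ℂ 𝓑 := by
  have hBbd : ∀ (t : ℝ) (x : X), ‖B t x‖ ≤ ‖𝓑‖ * ‖x‖ := by
    intro t x
    have h1 : B t x = 𝓑 (const ℝ x) t := by rw [h𝓑]; rfl
    rw [h1]
    refine le_trans ((𝓑 (const ℝ x)).norm_coe_le_norm t) ?_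
    calc ‖𝓑 (const ℝ x)‖ ≤ ‖𝓑‖ * ‖const ℝ x‖ := 𝓑.le_opNorm _
      _ = ‖𝓑‖ * ‖x‖ := by rw [norm_const_eq]
  have hinv : ∀ g ∈ LamBC (X := X) Λ, 𝓑 g ∈ LamBC (X := X) Λ := by
    intro g hg
    have hg' : circSpec X (bcToLinf X g) ⊆ Λ := hg
    show circSpec X (bcToLinf X (𝓑 g)) ⊆ Λ
    exact (circSpec_comp B hBper hBcont ‖𝓑‖ hBbd (norm_nonneg _) 𝓑 h𝓑 g).trans hg'
  refine ⟨LamBC (X := X) Λ, rfl, hinv, ?_⟩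
  intro lam hlam
  by_contra hns
  have hu : IsUnit (algebraMap ℂ ((ℝ →ᵇ X) →L[ℂ] (ℝ →ᵇ X)) lam - 𝓑) :=
    spectrum.notMem_iff.mp hns
  obtain ⟨C, hCper, hCcont, hCbd, hTC⟩ := exists_pointwise_inverse B hBper hBcont 𝓑 h𝓑
    (transBC X) (fun g t => rfl) lam hu
  set T : (ℝ →ᵇ X) →L[ℂ] (ℝ →ᵇ X) := ↑hu.unit⁻¹ with hT
  have huv : ∀ g : ℝ →ᵇ X, (algebraMap ℂ ((ℝ →ᵇ X) →L[ℂ] (ℝ →ᵇ X)) lam - 𝓑) (T g) = g := by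
    intro g
    calc (algebraMap ℂ ((ℝ →ᵇ X) →L[ℂ] (ℝ →ᵇ X)) lam - 𝓑) (T g)
        = (hu.unit : (ℝ →ᵇ X) →L[ℂ] (ℝ →ᵇ X)) (T g) := by rw [IsUnit.unit_spec]
      _ = ((↑hu.unit * ↑hu.unit⁻¹ : (ℝ →ᵇ X) →L[ℂ] (ℝ →ᵇ X))) g := by
          rw [ContinuousLinearMap.mul_apply]
      _ = g := by rw [Units.mul_inv]; exact ContinuousLinearMap.one_apply g
  have hvu : ∀ g : ℝ →ᵇ X, T ((algebraMap ℂ ((ℝ →ᵇ X) →L[ℂ] (ℝ →ᵇ X)) lam - 𝓑) g) = g := by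
    intro g
    calc T ((algebraMap ℂ ((ℝ →ᵇ X) →L[ℂ] (ℝ →ᵇ X)) lam - 𝓑) g)
        = T ((hu.unit : (ℝ →ᵇ X) →L[ℂ] (ℝ →ᵇ X)) g) := by rw [IsUnit.unit_spec]
      _ = ((↑hu.unit⁻¹ * ↑hu.unit : (ℝ →ᵇ X) →L[ℂ] (ℝ →ᵇ X))) g := by
          rw [ContinuousLinearMap.mul_apply]
      _ = g := by rw [Units.inv_mul]; exact ContinuousLinearMap.one_apply g
  have hTinv : ∀ g ∈ LamBC (X := X) Λ, T g ∈ LamBC (X := X) Λ := by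
    intro g hg
    have hg' : circSpec X (bcToLinf X g) ⊆ Λ := hg
    show circSpec X (bcToLinf X (T g)) ⊆ Λ
    exact (circSpec_comp C hCper hCcont ‖T‖ hCbd (norm_nonneg _) T hTC g).trans hg'
  have haval : ∀ y : ↥(LamBC (X := X) Λ),
      ((@algebraMap ℂ (↥(LamBC (X := X) Λ) →L[ℂ] ↥(LamBC (X := X) Λ)) _ ContinuousLinearMap.semiring _ lam
        - restrictCLM 𝓑 (LamBC (X := X) Λ) hinv) y : ℝ →ᵇ X)
      = (algebraMap ℂ ((ℝ →ᵇ X) →L[ℂ] (ℝ →ᵇ X)) lam - 𝓑) ↑y := by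
    intro y
    rw [ContinuousLinearMap.sub_apply, AddSubgroupClass.coe_sub,
      Algebra.algebraMap_eq_smul_one, ContinuousLinearMap.smul_apply,
      ContinuousLinearMap.one_apply, Submodule.coe_smul,
      ContinuousLinearMap.sub_apply, Algebra.algebraMap_eq_smul_one,
      ContinuousLinearMap.smul_apply, ContinuousLinearMap.one_apply]
    rfl
  have hab : (@algebraMap ℂ (↥(LamBC (X := X) Λ) →L[ℂ] ↥(LamBC (X := X) Λ)) _ ContinuousLinearMap.semiring _ lam
      - restrictCLM 𝓑 (LamBC (X := X) Λ) hinv) * restrictCLM T (LamBC (X := X) Λ) hTinv = 1 := by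
    refine ContinuousLinearMap.ext fun x => Subtype.ext ?_
    rw [ContinuousLinearMap.mul_apply, ContinuousLinearMap.one_apply, haval]
    exact huv ↑x
  have hba : restrictCLM T (LamBC (X := X) Λ) hTinv
      * (@algebraMap ℂ (↥(LamBC (X := X) Λ) →L[ℂ] ↥(LamBC (X := X) Λ)) _ ContinuousLinearMap.semiring _ lam
      - restrictCLM 𝓑 (LamBC (X := X) Λ) hinv) = 1 := by
    refine ContinuousLinearMap.ext fun x => Subtype.ext ?_
    rw [ContinuousLinearMap.mul_apply, ContinuousLinearMap.one_apply]
    show T _ = (↑x : ℝ →ᵇ X)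
    rw [haval]
    exact hvu ↑x
  have hisu : IsUnit (@algebraMap ℂ (↥(LamBC (X := X) Λ) →L[ℂ] ↥(LamBC (X := X) Λ)) _ ContinuousLinearMap.semiring _ lam
      - restrictCLM 𝓑 (LamBC (X := X) Λ) hinv) :=
    ⟨⟨_, restrictCLM T (LamBC (X := X) Λ) hTinv, hab, hba⟩, rfl⟩
  rw [spectrum.mem_iff] at hlam
  exact hlam hisu

end
end

section
/- Let (U(t,s))_{t≥s} be a 1-periodic strongly continuous evolutionary process on a complex Banach space X, with monodromy operators P(t) := U(t,t−1) and P := P(0). Let 𝓟 denote the operator of multiplication by P(t) on BC(ℝ,X), (𝓟g)(t) = P(t)g(t). Then σ(𝓟) ∖ {0} ⊂ σ(P) ∖ {0}, where σ(𝓟) is the spectrum of 𝓟 as a bounded operator on BC(ℝ,X) and σ(P) the spectrum of P on X. -/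
open MeasureTheory Complex Metric BoundedContinuousFunction

noncomputable section

variable (X : Type*) [NormedAddCommGroup X] [NormedSpace ℂ X] [CompleteSpace X]

set_option maxHeartbeats 1000000 in
lemma shiftU (E : EvolProcess X) (n : ℤ) (t s : ℝ) :
    E.U (t + n) (s + n) = E.U t s := by
  induction n using Int.induction_on with
  | zero => simp
  | succ k ih =>
      push_cast
      push_cast at ih
      rw [show t + ((k : ℝ) + 1) = (t + k) + 1 by ring,
        show s + ((k : ℝ) + 1) = (s + k) + 1 by ring, E.periodic, ih]
  | pred k ih =>
      push_cast
      push_cast at ih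
      calc E.U (t + (-(k : ℝ) - 1)) (s + (-(k : ℝ) - 1))
          = E.U (t + (-(k : ℝ) - 1) + 1) (s + (-(k : ℝ) - 1) + 1) := (E.periodic _ _).symm
        _ = E.U (t + -(k : ℝ)) (s + -(k : ℝ)) := by ring_nf
        _ = E.U t s := ih

set_option maxHeartbeats 1000000 in
lemma jointCont (E : EvolProcess X) :
    ContinuousOn (fun q : (ℝ × ℝ) × X => E.U q.1.1 q.1.2 q.2)
      {q : (ℝ × ℝ) × X | q.1.2 ≤ q.1.1} := by
  rintro ⟨⟨t₀, s₀⟩, x₀⟩ h0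
  simp only [Set.mem_setOf_eq] at h0
  obtain ⟨N, ω, hN, hω, hb⟩ := E.bound
  set S : Set ((ℝ × ℝ) × X) := {q | q.1.2 ≤ q.1.1} with hS
  set M := N * Real.exp (ω * (t₀ - s₀ + 2)) with hMdef
  have key : Filter.Tendsto (fun q : (ℝ × ℝ) × X => ‖E.U q.1.1 q.1.2 q.2 - E.U t₀ s₀ x₀‖)
      (nhdsWithin (((t₀, s₀), x₀)) S) (nhds 0) := by
    have hev : ∀ᶠ q : (ℝ × ℝ) × X in nhdsWithin (((t₀, s₀), x₀)) S,
        ‖E.U q.1.1 q.1.2 q.2 - E.U t₀ s₀ x₀‖ ≤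
          M * ‖q.2 - x₀‖ + ‖E.U q.1.1 q.1.2 x₀ - E.U t₀ s₀ x₀‖ := by
      have hc : Continuous fun q : (ℝ × ℝ) × X => q.1.1 - q.1.2 := by fun_prop
      have h1 : ∀ᶠ q : (ℝ × ℝ) × X in nhds (((t₀, s₀), x₀)), q.1.1 - q.1.2 < t₀ - s₀ + 2 :=
        (hc.tendsto (((t₀, s₀), x₀))).eventually_lt_const (by norm_num)
      filter_upwards [h1.filter_mono nhdsWithin_le_nhds, eventually_mem_nhdsWithin] with q hq hqS
      have hqS' : q.1.2 ≤ q.1.1 := hqS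
      have hU : ‖E.U q.1.1 q.1.2‖ ≤ M := by
        refine (hb _ _ hqS').trans ?_
        refine mul_le_mul_of_nonneg_left (Real.exp_le_exp.mpr ?_) hN.le
        exact mul_le_mul_of_nonneg_left hq.le hω.le
      have hdecomp : E.U q.1.1 q.1.2 q.2 - E.U t₀ s₀ x₀ =
          E.U q.1.1 q.1.2 (q.2 - x₀) + (E.U q.1.1 q.1.2 x₀ - E.U t₀ s₀ x₀) := by
        rw [map_sub]; abel
      rw [hdecomp]
      refine (norm_add_le _ _).trans (add_le_add_left ?_ _)
      exact ((E.U q.1.1 q.1.2).le_opNorm _).trans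
        (mul_le_mul_of_nonneg_right hU (norm_nonneg _))
    have hT : Filter.Tendsto (fun q : (ℝ × ℝ) × X =>
        M * ‖q.2 - x₀‖ + ‖E.U q.1.1 q.1.2 x₀ - E.U t₀ s₀ x₀‖)
        (nhdsWithin (((t₀, s₀), x₀)) S) (nhds 0) := by
      have t1 : Filter.Tendsto (fun q : (ℝ × ℝ) × X => M * ‖q.2 - x₀‖)
          (nhds (((t₀, s₀), x₀) : (ℝ × ℝ) × X)) (nhds 0) := by
        have hcc : Continuous fun q : (ℝ × ℝ) × X => M * ‖q.2 - x₀‖ := by fun_prop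
        simpa using hcc.tendsto (((t₀, s₀), x₀) : (ℝ × ℝ) × X)
      have hfst : Filter.Tendsto (fun q : (ℝ × ℝ) × X => q.1)
          (nhdsWithin (((t₀, s₀), x₀)) S) (nhdsWithin (t₀, s₀) {p : ℝ × ℝ | p.2 ≤ p.1}) := by
        apply tendsto_nhdsWithin_of_tendsto_nhds_of_eventually_within
        · exact continuous_fst.continuousAt.mono_left nhdsWithin_le_nhds
        · exact eventually_mem_nhdsWithin.mono fun q hq => hq
      have t2 : Filter.Tendsto (fun q : (ℝ × ℝ) × X => E.U q.1.1 q.1.2 x₀)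
          (nhdsWithin (((t₀, s₀), x₀)) S) (nhds (E.U t₀ s₀ x₀)) :=
        ((E.strongCont x₀ (t₀, s₀) h0).tendsto).comp hfst
      have t2' := tendsto_iff_norm_sub_tendsto_zero.mp t2
      simpa using (t1.mono_left nhdsWithin_le_nhds).add t2'
    exact squeeze_zero' (Filter.Eventually.of_forall fun q => norm_nonneg _) hev hT
  exact tendsto_iff_norm_sub_tendsto_zero.mpr key

lemma ring_aux {R : Type*} [Ring R] [Algebra ℂ R] {lam : ℂ} (hlam : lam ≠ 0) (A B P q : R)
    (hBA : B * A = P)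
    (h1 : (algebraMap ℂ R lam - P) * q = 1) (h2 : q * (algebraMap ℂ R lam - P) = 1) :
    (algebraMap ℂ R lam - A * B) * (lam⁻¹ • (1 + A * q * B)) = 1 ∧
    (lam⁻¹ • (1 + A * q * B)) * (algebraMap ℂ R lam - A * B) = 1 ∧
    q * P = P * q := by
  set L := algebraMap ℂ R lam with hL
  have hcA : L * A = A * L := Algebra.commutes lam A
  have hcB : L * B = B * L := Algebra.commutes lam B
  have hcq : L * q = q * L := Algebra.commutes lam q
  have hfin : ∀ x : R, x = L → lam⁻¹ • x = 1 := by
    intro x hx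
    rw [hx, hL, Algebra.algebraMap_eq_smul_one, smul_smul, inv_mul_cancel₀ hlam, one_smul]
  refine ⟨?_, ?_, ?_⟩
  · rw [mul_smul_comm]
    apply hfin
    calc (L - A * B) * (1 + A * q * B)
        = L + (L * A) * (q * B) - A * B - A * ((B * A) * (q * B)) := by noncomm_ring
      _ = L + (A * L) * (q * B) - A * B - A * (P * (q * B)) := by rw [hcA, hBA]
      _ = L + A * (((L - P) * q) * B) - A * B := by noncomm_ring
      _ = L := by rw [h1]; noncomm_ring
  · rw [smul_mul_assoc]
    apply hfin
    calc (1 + A * q * B) * (L - A * B)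
        = L - A * B + (A * q) * (B * L) - A * (q * ((B * A) * B)) := by noncomm_ring
      _ = L - A * B + (A * q) * (L * B) - A * (q * (P * B)) := by rw [hcB, hBA]
      _ = L - A * B + A * ((q * (L - P)) * B) := by noncomm_ring
      _ = L := by rw [h2]; noncomm_ring
  · calc q * P = q * L - q * (L - P) := by noncomm_ring
      _ = L * q - 1 := by rw [h2, hcq]
      _ = (L - P) * q + P * q - 1 := by noncomm_ring
      _ = P * q := by rw [h1]; noncomm_ring


set_option maxHeartbeats 2000000 in
/-- for the multiplication operator `𝓟` by the monodromy operators
`P(t) = U(t,t-1)` on `BC(ℝ,X)`, one has `σ(𝓟) ∖ {0} ⊆ σ(P) ∖ {0}` with `P = P(0)`. -/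
theorem stmt15 (E : EvolProcess X) (𝓟 : (ℝ →ᵇ X) →L[ℂ] (ℝ →ᵇ X))
    (h𝓟 : ∀ (g : ℝ →ᵇ X) (t : ℝ), 𝓟 g t = E.U t (t - 1) (g t)) :
    spectrum ℂ 𝓟 \ {0} ⊆ spectrum ℂ (E.U 0 (0 - 1)) \ {0} := by
  intro lam hlam
  obtain ⟨hspec, hne⟩ := hlam
  have hlam0 : lam ≠ 0 := by simpa using hne
  refine ⟨?_, hne⟩
  by_contra hPn
  have hP : IsUnit (algebraMap ℂ (X →L[ℂ] X) lam - E.U 0 (0 - 1)) :=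
    spectrum.notMem_iff.mp hPn
  set P0 : X →L[ℂ] X := E.U 0 (0 - 1) with hP0
  set q : X →L[ℂ] X := ↑hP.unit⁻¹ with hq
  have h1 : (algebraMap ℂ (X →L[ℂ] X) lam - P0) * q = 1 := by
    have := hP.unit.mul_inv
    rwa [hP.unit_spec] at this
  have h2 : q * (algebraMap ℂ (X →L[ℂ] X) lam - P0) = 1 := by
    have := hP.unit.inv_mul
    rwa [hP.unit_spec] at this
  have hfr0 : ∀ t : ℝ, (0 : ℝ) ≤ Int.fract t := Int.fract_nonneg
  have hfr1 : ∀ t : ℝ, Int.fract t < 1 := Int.fract_lt_one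
  -- the two factorizations of the monodromy operators
  have hBA : ∀ t : ℝ, E.U 0 (Int.fract t - 1) * E.U (Int.fract t) 0 = P0 := by
    intro t
    have e1 : E.U (Int.fract t - 1) (0 - 1) = E.U (Int.fract t) 0 := by
      have := shiftU X E (-1) (Int.fract t) 0
      push_cast at this
      rw [← this]
      congr 1 <;> ring
    rw [ContinuousLinearMap.mul_def, ← e1,
      E.comp (0 - 1) (Int.fract t - 1) 0 (by linarith [hfr0 t]) (by linarith [hfr1 t])]
  have hAB : ∀ t : ℝ, E.U t (t - 1) = E.U (Int.fract t) 0 * E.U 0 (Int.fract t - 1) := by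
    intro t
    have e1 : E.U t (t - 1) = E.U (Int.fract t) (Int.fract t - 1) := by
      have := shiftU X E ⌊t⌋ (Int.fract t) (Int.fract t - 1)
      rw [← this]
      congr 1 <;> (rw [Int.fract]; ring)
    rw [e1, ContinuousLinearMap.mul_def,
      E.comp (Int.fract t - 1) 0 (Int.fract t) (by linarith [hfr1 t]) (hfr0 t)]
  have hqP : q * P0 = P0 * q :=
    (ring_aux hlam0 (1 : X →L[ℂ] X) P0 P0 q (by rw [mul_one]) h1 h2).2.2
  set W : ℝ → (X →L[ℂ] X) :=
    fun t => lam⁻¹ • (1 + E.U (Int.fract t) 0 * q * E.U 0 (Int.fract t - 1)) with hWdef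
  have keys : ∀ t : ℝ,
      (algebraMap ℂ (X →L[ℂ] X) lam - E.U t (t - 1)) * W t = 1 ∧
      W t * (algebraMap ℂ (X →L[ℂ] X) lam - E.U t (t - 1)) = 1 := by
    intro t
    obtain ⟨k1, k2, -⟩ :=
      ring_aux hlam0 (E.U (Int.fract t) 0) (E.U 0 (Int.fract t - 1)) P0 q (hBA t) h1 h2
    exact ⟨by rw [hAB t]; exact k1, by rw [hAB t]; exact k2⟩
  -- continuity of t ↦ W t (g t)
  have hcont : ∀ g : ℝ →ᵇ X, Continuous fun t => W t (g t) := by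
    intro g
    have hmain : Continuous fun t : ℝ =>
        E.U (Int.fract t) 0 (q (E.U 0 (Int.fract t - 1) (g t))) := by
      have hinner : ContinuousOn (fun p : ℝ × ℝ => E.U 0 (p.2 - 1) (g p.1))
          (Set.univ ×ˢ Set.Icc (0 : ℝ) 1) := by
        have hmap : Continuous fun p : ℝ × ℝ => ((((0 : ℝ), p.2 - 1) : ℝ × ℝ), g p.1) := by
          fun_prop
        have hmapsto : Set.MapsTo (fun p : ℝ × ℝ => ((((0 : ℝ), p.2 - 1) : ℝ × ℝ), g p.1))
            (Set.univ ×ˢ Set.Icc (0 : ℝ) 1) {q : (ℝ × ℝ) × X | q.1.2 ≤ q.1.1} := by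
          rintro ⟨a, b⟩ hab
          simp only [Set.mem_prod, Set.mem_Icc] at hab
          simp only [Set.mem_setOf_eq]
          linarith [hab.2.2]
        have := ContinuousOn.comp (jointCont X E) hmap.continuousOn hmapsto
        simpa [Function.comp_def] using this
      have hq' : ContinuousOn (fun p : ℝ × ℝ => q (E.U 0 (p.2 - 1) (g p.1)))
          (Set.univ ×ˢ Set.Icc (0 : ℝ) 1) := q.continuous.comp_continuousOn hinner
      have houter : ContinuousOn (fun p : ℝ × ℝ =>
          E.U p.2 0 (q (E.U 0 (p.2 - 1) (g p.1)))) (Set.univ ×ˢ Set.Icc (0 : ℝ) 1) := by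
        have hmap2 : ContinuousOn (fun p : ℝ × ℝ =>
            (((p.2, (0 : ℝ)) : ℝ × ℝ), q (E.U 0 (p.2 - 1) (g p.1))))
            (Set.univ ×ˢ Set.Icc (0 : ℝ) 1) :=
          ((continuous_snd.continuousOn).prodMk continuousOn_const).prodMk hq'
        have hmapsto2 : Set.MapsTo (fun p : ℝ × ℝ =>
            (((p.2, (0 : ℝ)) : ℝ × ℝ), q (E.U 0 (p.2 - 1) (g p.1))))
            (Set.univ ×ˢ Set.Icc (0 : ℝ) 1) {q : (ℝ × ℝ) × X | q.1.2 ≤ q.1.1} := by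
          rintro ⟨a, b⟩ hab
          simp only [Set.mem_prod, Set.mem_Icc] at hab
          simp only [Set.mem_setOf_eq]
          exact hab.2.1
        have := ContinuousOn.comp (jointCont X E) hmap2 hmapsto2
        simpa [Function.comp_def] using this
      have hper : ∀ s : ℝ,
          (fun (t τ : ℝ) => E.U τ 0 (q (E.U 0 (τ - 1) (g t)))) s 0
            = (fun (t τ : ℝ) => E.U τ 0 (q (E.U 0 (τ - 1) (g t)))) s 1 := by
        intro s
        have h10 : E.U 1 0 = P0 := by
          have hpp := E.periodic 0 (-1)
          norm_num at hpp
          rw [hP0, show (0 : ℝ) - 1 = -1 by norm_num]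
          exact hpp
        have hqP' := DFunLike.congr_fun hqP (g s)
        simp only [ContinuousLinearMap.mul_apply] at hqP'
        simp only []
        rw [show (1 : ℝ) - 1 = 0 by norm_num, E.idem 0, h10]
        simp only [ContinuousLinearMap.id_apply]
        rw [← hP0]
        exact hqP'
      have := ContinuousOn.comp_fract
        (f := fun (t τ : ℝ) => E.U τ 0 (q (E.U 0 (τ - 1) (g t))))
        (s := fun t : ℝ => t)
        (by exact houter) continuous_id hper
      simpa using this
    have heq : (fun t => W t (g t)) = fun t =>
        lam⁻¹ • (g t + E.U (Int.fract t) 0 (q (E.U 0 (Int.fract t - 1) (g t)))) := by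
      funext t
      simp only [hWdef, ContinuousLinearMap.smul_apply, ContinuousLinearMap.add_apply,
        ContinuousLinearMap.one_apply, ContinuousLinearMap.mul_apply]
    rw [heq]
    exact (g.continuous.add hmain).const_smul _
  -- uniform boundedness of W
  obtain ⟨N, ω, hN, hω, hb⟩ := E.bound
  set C0 := N * Real.exp ω with hC0
  have hA' : ∀ t : ℝ, ‖E.U (Int.fract t) 0‖ ≤ C0 := by
    intro t
    refine (hb _ _ (hfr0 t)).trans ?_
    rw [hC0]
    refine mul_le_mul_of_nonneg_left (Real.exp_le_exp.mpr ?_) hN.le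
    nlinarith [hfr1 t, hfr0 t]
  have hB' : ∀ t : ℝ, ‖E.U 0 (Int.fract t - 1)‖ ≤ C0 := by
    intro t
    refine (hb 0 _ (by linarith [hfr1 t])).trans ?_
    rw [hC0]
    refine mul_le_mul_of_nonneg_left (Real.exp_le_exp.mpr ?_) hN.le
    nlinarith [hfr0 t]
  set C := ‖lam‖⁻¹ * (1 + C0 * ‖q‖ * C0) with hC
  have hC0nn : 0 ≤ C0 := by positivity
  have hCnn : 0 ≤ C := by positivity
  have hWb : ∀ t : ℝ, ‖W t‖ ≤ C := by
    intro t
    simp only [hWdef]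
    refine le_trans (ContinuousLinearMap.opNorm_smul_le _ _) ?_
    rw [norm_inv, hC]
    refine mul_le_mul_of_nonneg_left ?_ (by positivity)
    refine (norm_add_le _ _).trans (add_le_add ?_ ?_)
    · calc ‖(1 : X →L[ℂ] X)‖ = ‖ContinuousLinearMap.id ℂ X‖ := rfl
        _ ≤ 1 := ContinuousLinearMap.norm_id_le
    · calc ‖E.U (Int.fract t) 0 * q * E.U 0 (Int.fract t - 1)‖
          ≤ ‖E.U (Int.fract t) 0 * q‖ * ‖E.U 0 (Int.fract t - 1)‖ := norm_mul_le _ _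
        _ ≤ (‖E.U (Int.fract t) 0‖ * ‖q‖) * ‖E.U 0 (Int.fract t - 1)‖ :=
            mul_le_mul_of_nonneg_right (norm_mul_le _ _) (norm_nonneg _)
        _ ≤ C0 * ‖q‖ * C0 :=
            mul_le_mul (mul_le_mul_of_nonneg_right (hA' t) (norm_nonneg q)) (hB' t)
              (norm_nonneg _) (by positivity)
  have hptbound : ∀ (g : ℝ →ᵇ X) (t : ℝ), ‖W t (g t)‖ ≤ C * ‖g‖ := fun g t =>
    ((W t).le_opNorm _).trans (mul_le_mul (hWb t) (g.norm_coe_le_norm t) (norm_nonneg _) hCnn)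
  -- the candidate inverse as a continuous linear operator
  set R0 : (ℝ →ᵇ X) →ₗ[ℂ] (ℝ →ᵇ X) :=
    { toFun := fun g => BoundedContinuousFunction.ofNormedAddCommGroup
        (fun t => W t (g t)) (hcont g) (C * ‖g‖) (hptbound g)
      map_add' := by
        intro g h
        ext t
        simp
      map_smul' := by
        intro c g
        ext t
        simp } with hR0
  have hR0norm : ∀ g : ℝ →ᵇ X, ‖R0 g‖ ≤ C * ‖g‖ := fun g =>
    BoundedContinuousFunction.norm_ofNormedAddCommGroup_le (hcont g)
      (mul_nonneg hCnn (norm_nonneg g)) (hptbound g)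
  set Rop : (ℝ →ᵇ X) →L[ℂ] (ℝ →ᵇ X) := R0.mkContinuous C hR0norm with hRop
  have hRcoe : ∀ (g : ℝ →ᵇ X) (t : ℝ), Rop g t = W t (g t) := fun g t => rfl
  set Lop := algebraMap ℂ ((ℝ →ᵇ X) →L[ℂ] (ℝ →ᵇ X)) lam with hLop
  have happly : ∀ (g : ℝ →ᵇ X) (t : ℝ),
      (Lop - 𝓟) g t = lam • g t - E.U t (t - 1) (g t) := by
    intro g t
    simp [hLop, h𝓟, Algebra.algebraMap_eq_smul_one]
  have hmulapp : ∀ (t : ℝ) (x : X),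
      (algebraMap ℂ (X →L[ℂ] X) lam - E.U t (t - 1)) x = lam • x - E.U t (t - 1) x := by
    intro t x
    simp [Algebra.algebraMap_eq_smul_one]
  have hval_inv : (Lop - 𝓟) * Rop = 1 := by
    refine ContinuousLinearMap.ext fun g => BoundedContinuousFunction.ext fun t => ?_
    have step : ((Lop - 𝓟) * Rop) g t = g t := by
      calc ((Lop - 𝓟) * Rop) g t = (Lop - 𝓟) (Rop g) t := rfl
        _ = lam • (W t (g t)) - E.U t (t - 1) (W t (g t)) := by
            rw [happly]
            simp only [hRcoe]
        _ = (algebraMap ℂ (X →L[ℂ] X) lam - E.U t (t - 1)) (W t (g t)) := (hmulapp t _).symm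
        _ = ((algebraMap ℂ (X →L[ℂ] X) lam - E.U t (t - 1)) * W t) (g t) := rfl
        _ = g t := by rw [(keys t).1]; simp
    simpa using step
  have hinv_val : Rop * (Lop - 𝓟) = 1 := by
    refine ContinuousLinearMap.ext fun g => BoundedContinuousFunction.ext fun t => ?_
    have step : (Rop * (Lop - 𝓟)) g t = g t := by
      calc (Rop * (Lop - 𝓟)) g t = W t ((Lop - 𝓟) g t) := hRcoe _ _
        _ = W t ((algebraMap ℂ (X →L[ℂ] X) lam - E.U t (t - 1)) (g t)) := by
            rw [happly, hmulapp]
        _ = (W t * (algebraMap ℂ (X →L[ℂ] X) lam - E.U t (t - 1))) (g t) := rfl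
        _ = g t := by rw [(keys t).2]; simp
    simpa using step
  have hunit : IsUnit (Lop - 𝓟) := ⟨⟨Lop - 𝓟, Rop, hval_inv, hinv_val⟩, rfl⟩
  rw [hLop] at hunit
  exact spectrum.mem_iff.mp hspec hunit

end
end
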